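/- arXiv:0907.2949 — 2 statements merged into one kernel-verified Lean document; each statement's English description precedes it below -/
import Mathlib

section
/- Let X = {0,1,…,K} with K ≥ 1 and let k ≥ 2 be an integer. The aggregate-difference family of functions (f_n : X^n → ℤ/kℤ)_{n≥1} defined by f_n(x) = (Σ_{1 ≤ i < j ≤ n} |x_i − x_j|) mod k is not computable with infinite memory. -/
/-- A finite bidirectional connected network on `n` nodes, with port labelings:
each node `i` has a bijection between its neighbors and the port numbers
`{0, …, deg(i) - 1}`. -/
structure PortNetwork (n : ℕ) where
  adj : Fin n → Fin n → Bool
  symm : ∀ i j, adj i j → adj j i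
  loopless : ∀ i, ¬ adj i i
  connected : ∀ i j : Fin n, Relation.ReflTransGen (fun a b => adj a b) i j
  port : ∀ i : Fin n, {j // adj i j} ≃ Fin (Fintype.card {j // adj i j})

/-- The degree of node `i`. -/
def PortNetwork.deg {n : ℕ} (N : PortNetwork n) (i : Fin n) : ℕ :=
  Fintype.card {j // N.adj i j}

/-- An algorithm: a family of transition functions
`A_d : X × Z_d × Y × M^d → Z_d × Y × M^d`, together with the distinguished
initial ("∅") elements of `Z_d`, `Y`, `M`. -/
structure Algorithm (X Y M : Type) (Z : ℕ → Type) where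
  trans : ∀ d : ℕ, X → Z d → Y → (Fin d → M) → Z d × Y × (Fin d → M)
  z0 : ∀ d, Z d
  y0 : Y
  m0 : M

/-- The synchronous evolution of the network: `A.run N x t i` is the state
`(z_i(t), y_i(t), (m_{i,p}(t))_p)` of node `i` at time `t`, starting from
initial values `x`.  At each round, node `i` receives through its `k`-th port
the message sent by the neighbor `j_k` on that port, namely the message that
`j_k` put on its own port leading back to `i`. -/
def Algorithm.run {X Y M : Type} {Z : ℕ → Type} (A : Algorithm X Y M Z) {n : ℕ}
    (N : PortNetwork n) (x : Fin n → X) :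
    ℕ → ∀ i : Fin n, Z (N.deg i) × Y × (Fin (N.deg i) → M)
  | 0 => fun _ => (A.z0 _, A.y0, fun _ => A.m0)
  | t + 1 => fun i =>
      A.trans (N.deg i) (x i) (A.run N x t i).1 (A.run N x t i).2.1
        (fun k =>
          let j := (N.port i).symm k
          (A.run N x t j.1).2.2 (N.port j.1 ⟨i, N.symm _ _ j.2⟩))

/-- `y` is the final output of the execution of `A` on the network `N` with
initial values `x`. -/
def Algorithm.FinalOutput {X Y M : Type} {Z : ℕ → Type} (A : Algorithm X Y M Z) {n : ℕ}
    (N : PortNetwork n) (x : Fin n → X) (y : Y) : Prop :=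
  ∃ t', ∀ t, t' ≤ t → ∀ i, (A.run N x t i).2.1 = y

/-- A family of functions `(f_n : X^n → Y)_{n ≥ 1}` is computable if there is an
algorithm with `Y`, `M` and all `Z_d` finite which, on every connected network
with ports and every input, produces the final output `f_n(x)`. -/
def ComputableFamily {X Y : Type} (f : ∀ n, (Fin n → X) → Y) : Prop :=
  ∃ (M : Type) (Z : ℕ → Type) (A : Algorithm X Y M Z),
    Finite Y ∧ Finite M ∧ (∀ d, Finite (Z d)) ∧
    ∀ n, 0 < n → ∀ (N : PortNetwork n) (x : Fin n → X),
      A.FinalOutput N x (f n x)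

/-- Computability with infinite memory: `Y` and the `Z_d` are allowed to be
countable (the message alphabet `M` stays finite). -/
def ComputableWithInfiniteMemory {X Y : Type} (f : ∀ n, (Fin n → X) → Y) : Prop :=
  ∃ (M : Type) (Z : ℕ → Type) (A : Algorithm X Y M Z),
    Countable Y ∧ Finite M ∧ (∀ d, Countable (Z d)) ∧
    ∀ n, 0 < n → ∀ (N : PortNetwork n) (x : Fin n → X),
      A.FinalOutput N x (f n x)


namespace AggDiff

open scoped Fin.CommRing

variable {N : ℕ} [NeZero N]

def cycAdj (i j : Fin N) : Bool := decide (j = i + 1 ∨ j = i - 1)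

lemma two_ne (hN : 3 ≤ N) (i : Fin N) : i + 1 ≠ i - 1 := by
  intro h
  have h2 : i + 1 - (i - 1) = 0 := by rw [h]; ring
  have : ((2:ℕ) : Fin N) = 0 := by rw [← h2]; push_cast; ring
  have := congrArg Fin.val this
  rw [Fin.val_natCast] at this
  have hlt : 2 % N = 2 := Nat.mod_eq_of_lt (by omega)
  simp [hlt] at this

lemma one_ne (hN : 3 ≤ N) (i : Fin N) : i + 1 ≠ i := by
  intro h
  have h2 : i + 1 - i = 0 := by simp [h]
  have : ((1:ℕ) : Fin N) = 0 := by rw [← h2]; push_cast; ring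
  have := congrArg Fin.val this
  rw [Fin.val_natCast] at this
  have hlt : 1 % N = 1 := Nat.mod_eq_of_lt (by omega)
  simp [hlt] at this

lemma cycAdj_iff (i j : Fin N) : cycAdj i j ↔ (j = i + 1 ∨ j = i - 1) := by
  simp [cycAdj]

def cycEquiv (hN : 3 ≤ N) (i : Fin N) : {j // cycAdj i j} ≃ Fin 2 where
  toFun s := if s.1 = i + 1 then 0 else 1
  invFun k := if k = 0 then ⟨i + 1, by simp [cycAdj_iff]⟩ else ⟨i - 1, by simp [cycAdj_iff]⟩
  left_inv s := by
    rcases (cycAdj_iff i s.1).1 s.2 with h | h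
    · apply Subtype.ext; simp [h]
    · apply Subtype.ext
      have hne : i - 1 ≠ i + 1 := fun hh => two_ne hN i hh.symm
      simp [h, hne]
  right_inv k := by
    fin_cases k
    · simp
    · have : (1 : Fin 2) ≠ 0 := by decide
      simp [this, two_ne hN i]
      intro hh; exact absurd hh.symm (two_ne hN i)

lemma card_cyc (hN : 3 ≤ N) (i : Fin N) : Fintype.card {j // cycAdj i j} = 2 := by
  rw [Fintype.card_congr (cycEquiv hN i), Fintype.card_fin]

def cycle (hN : 3 ≤ N) : PortNetwork N where
  adj := cycAdj
  symm := fun i j h => by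
    rcases (cycAdj_iff i j).1 h with h' | h' <;> rw [cycAdj_iff]
    · right; rw [h']; ring
    · left; rw [h']; ring
  loopless := fun i h => by
    rcases (cycAdj_iff i i).1 h with h' | h'
    · exact one_ne hN i h'.symm
    · have h2 : i + 1 = i - 1 + 1 := congrArg (· + 1) h'
      have h3 : i - 1 + 1 = i := by ring
      rw [h3] at h2
      exact one_ne hN i h2
  connected := fun i j => by
    have key : ∀ t : ℕ, Relation.ReflTransGen (fun a b => cycAdj a b) i (i + (t : Fin N)) := by
      intro t
      induction t with
      | zero => simpa using Relation.ReflTransGen.refl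
      | succ t ih =>
        have : (((t+1 : ℕ)) : Fin N) = (t : Fin N) + 1 := by push_cast; ring
        rw [this, ← add_assoc]
        exact ih.tail (by rw [cycAdj_iff]; left; rfl)
    have := key (j - i).val
    have h2 : i + (j - i) = j := by ring
    rw [Fin.cast_val_eq_self, h2] at this
    exact this
  port i := (cycEquiv hN i).trans (finCongr (card_cyc hN i).symm)

lemma cycle_deg (hN : 3 ≤ N) (i : Fin N) : (cycle hN).deg i = 2 := card_cyc hN i

lemma port_val_add (hN : 3 ≤ N) (i : Fin N) (s : {j // (cycle hN).adj i j}) (h : s.1 = i + 1) :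
    ((cycle hN).port i s).val = 0 := by
  show ((finCongr (card_cyc hN i).symm) ((cycEquiv hN i) s)).val = 0
  rw [finCongr_apply, Fin.coe_cast]
  simp [cycEquiv, h]

lemma port_val_sub (hN : 3 ≤ N) (i : Fin N) (s : {j // (cycle hN).adj i j}) (h : s.1 = i - 1) :
    ((cycle hN).port i s).val = 1 := by
  show ((finCongr (card_cyc hN i).symm) ((cycEquiv hN i) s)).val = 1
  rw [finCongr_apply, Fin.coe_cast]
  have hne : s.1 ≠ i + 1 := by rw [h]; exact fun hh => two_ne hN i hh.symm
  simp [cycEquiv, hne]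

lemma port_symm_val (hN : 3 ≤ N) (i : Fin N) (k : Fin ((cycle hN).deg i)) :
    (((cycle hN).port i).symm k).1 = if (k : ℕ) = 0 then i + 1 else i - 1 := by
  show ((cycEquiv hN i).symm ((finCongr (card_cyc hN i).symm).symm k)).1 = _
  have : ((finCongr (card_cyc hN i).symm).symm k : Fin 2) = if (k:ℕ) = 0 then 0 else 1 := by
    have hk2 : (k:ℕ) < 2 := lt_of_lt_of_eq k.isLt (cycle_deg hN i)
    have h01 : (k:ℕ) = 0 ∨ (k:ℕ) = 1 := by omega
    rcases h01 with h | h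
    · rw [if_pos h]; exact Fin.ext h
    · rw [if_neg (by omega)]; exact Fin.ext h
  rw [this]
  by_cases h : (k:ℕ) = 0 <;> simp [h, cycEquiv]


variable {X Y M : Type} {Z : ℕ → Type}

def cast2 {d : ℕ} (h : d = 2) (s : Z d × Y × (Fin d → M)) : Z 2 × Y × (Fin 2 → M) :=
  h ▸ s

lemma cast2_y {d} (h : d = 2) (s : Z d × Y × (Fin d → M)) :
    (cast2 h s).2.1 = s.2.1 := by subst h; rfl

lemma cast2_m {d} (h : d = 2) (s : Z d × Y × (Fin d → M)) (kk : Fin 2) :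
    (cast2 h s).2.2 kk = s.2.2 (Fin.cast h.symm kk) := by subst h; rfl

lemma cast2_fst {d} (h : d = 2) (s : Z d × Y × (Fin d → M)) :
    (cast2 h s).1 = h ▸ s.1 := by subst h; rfl

lemma cast2_init (A : Algorithm X Y M Z) {d} (h : d = 2) :
    cast2 h ((A.z0 d, A.y0, fun _ => A.m0) : Z d × Y × (Fin d → M))
      = (A.z0 2, A.y0, fun _ => A.m0) := by subst h; rfl

lemma cast2_trans (A : Algorithm X Y M Z) {d} (h : d = 2) (xx : X) (z : Z d) (y : Y)
    (m : Fin d → M) :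
    cast2 h (A.trans d xx z y m)
      = A.trans 2 xx (h ▸ z) y (fun kk => m (Fin.cast h.symm kk)) := by subst h; rfl

variable {N : ℕ} [NeZero N]

lemma port_symm_eq0 (hN : 3 ≤ N) (i : Fin N) (k : Fin ((cycle hN).deg i)) (hk : (k:ℕ) = 0) :
    ((cycle hN).port i).symm k = ⟨i + 1, by show cycAdj i (i+1); rw [cycAdj_iff]; left; rfl⟩ := by
  apply Subtype.ext
  rw [port_symm_val hN i k, if_pos hk]

lemma port_symm_eq1 (hN : 3 ≤ N) (i : Fin N) (k : Fin ((cycle hN).deg i)) (hk : (k:ℕ) ≠ 0) :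
    ((cycle hN).port i).symm k = ⟨i - 1, by show cycAdj i (i-1); rw [cycAdj_iff]; right; rfl⟩ := by
  apply Subtype.ext
  rw [port_symm_val hN i k, if_neg hk]

lemma cycle_msg (A : Algorithm X Y M Z) (hN : 3 ≤ N) (x : Fin N → X) (t : ℕ) (i : Fin N)
    (k : Fin ((cycle hN).deg i)) :
    (A.run (cycle hN) x t (((cycle hN).port i).symm k).1).2.2
        ((cycle hN).port (((cycle hN).port i).symm k).1
          ⟨i, (cycle hN).symm _ _ (((cycle hN).port i).symm k).2⟩)
    = if (k:ℕ) = 0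
      then (cast2 (cycle_deg hN (i+1)) (A.run (cycle hN) x t (i+1))).2.2 1
      else (cast2 (cycle_deg hN (i-1)) (A.run (cycle hN) x t (i-1))).2.2 0 := by
  by_cases hk : (k:ℕ) = 0
  · rw [if_pos hk]
    have heq := congrArg
      (fun s : {j // (cycle hN).adj i j} => (A.run (cycle hN) x t s.1).2.2
        ((cycle hN).port s.1 ⟨i, (cycle hN).symm _ _ s.2⟩)) (port_symm_eq0 hN i k hk)
    dsimp only at heq
    rw [heq, cast2_m]
    refine congrArg _ (Fin.ext ?_)
    rw [port_val_sub hN (i+1) _ (by show i = i + 1 - 1; ring)]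
    simp
  · rw [if_neg hk]
    have heq := congrArg
      (fun s : {j // (cycle hN).adj i j} => (A.run (cycle hN) x t s.1).2.2
        ((cycle hN).port s.1 ⟨i, (cycle hN).symm _ _ s.2⟩)) (port_symm_eq1 hN i k hk)
    dsimp only at heq
    rw [heq, cast2_m]
    refine congrArg _ (Fin.ext ?_)
    rw [port_val_add hN (i-1) _ (by show i = i - 1 + 1; ring)]
    simp

theorem bisim (A : Algorithm X Y M Z) {nb ns : ℕ} [NeZero nb] [NeZero ns]
    (hb : 3 ≤ nb) (hs : 3 ≤ ns) (φ : Fin nb → Fin ns)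
    (hφa : ∀ i, φ (i + 1) = φ i + 1) (hφs : ∀ i, φ (i - 1) = φ i - 1)
    (x : Fin ns → X) :
    ∀ t i, cast2 (cycle_deg hb i) (A.run (cycle hb) (fun j => x (φ j)) t i)
         = cast2 (cycle_deg hs (φ i)) (A.run (cycle hs) x t (φ i)) := by
  intro t
  induction t with
  | zero => intro i; rw [show A.run (cycle hb) (fun j => x (φ j)) 0 i = (A.z0 _, A.y0, fun _ => A.m0) from rfl,
      show A.run (cycle hs) x 0 (φ i) = (A.z0 _, A.y0, fun _ => A.m0) from rfl,
      cast2_init, cast2_init]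
  | succ t ih =>
    intro i
    show cast2 _ (A.trans _ _ _ _ _) = cast2 _ (A.trans _ _ _ _ _)
    rw [cast2_trans, cast2_trans]
    have hz : (cycle_deg hb i) ▸ (A.run (cycle hb) (fun j => x (φ j)) t i).1
        = (cycle_deg hs (φ i)) ▸ (A.run (cycle hs) x t (φ i)).1 := by
      rw [← cast2_fst, ← cast2_fst, ih i]
    have hy : (A.run (cycle hb) (fun j => x (φ j)) t i).2.1
        = (A.run (cycle hs) x t (φ i)).2.1 := by
      rw [← cast2_y (cycle_deg hb i), ← cast2_y (cycle_deg hs (φ i)), ih i]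
    rw [hz, hy]
    congr 1
    funext kk
    dsimp only
    rw [cycle_msg A hb, cycle_msg A hs]
    simp only [Fin.coe_cast]
    by_cases hkk : (kk:ℕ) = 0
    · rw [if_pos hkk, if_pos hkk, ih (i+1), hφa i]
    · rw [if_neg hkk, if_neg hkk, ih (i-1), hφs i]



def phi (m n : ℕ) (hn : 0 < n) (i : Fin (m * n)) : Fin n := ⟨i.val % n, Nat.mod_lt _ hn⟩

lemma phi_add {m n : ℕ} (hn : 2 ≤ n) (hmn : 2 ≤ m * n) [NeZero n] [NeZero (m*n)]
    (i : Fin (m * n)) : phi m n (by omega) (i + 1) = phi m n (by omega) i + 1 := by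
  apply Fin.ext
  show (i + 1).val % n = ((phi m n (by omega) i).val + (1 : Fin n).val) % n
  rw [Fin.val_add, Fin.val_one', Fin.val_one']
  have h1 : 1 % (m * n) = 1 := Nat.mod_eq_of_lt (by omega)
  have h2 : 1 % n = 1 := Nat.mod_eq_of_lt (by omega)
  rw [h1, h2]
  show (i.val + 1) % (m * n) % n = (i.val % n + 1) % n
  rw [Nat.mod_mod_of_dvd _ (dvd_mul_left n m), Nat.mod_add_mod]

lemma phi_sub {m n : ℕ} (hn : 2 ≤ n) (hmn : 2 ≤ m * n) [NeZero n] [NeZero (m*n)]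
    (i : Fin (m * n)) : phi m n (by omega) (i - 1) = phi m n (by omega) i - 1 := by
  apply Fin.ext
  have hm : 1 ≤ m := by by_contra h; push_neg at h; interval_cases m <;> omega
  have hsub : ∀ (N : ℕ) (hN : 2 ≤ N) (a b : Fin N), (a - b).val = (N - b.val + a.val) % N := by
    intro N hN a b; rw [Fin.sub_def]
  show ((i - 1 : Fin (m*n)).val) % n = ((phi m n (by omega) i : Fin n) - (1:Fin n)).val
  rw [hsub _ hmn, hsub _ hn]
  rw [Fin.val_one', Fin.val_one', Nat.mod_eq_of_lt (by omega : 1 < m*n), Nat.mod_eq_of_lt (by omega : 1 < n)]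
  show (m * n - 1 + i.val) % (m * n) % n = (n - 1 + i.val % n) % n
  rw [Nat.mod_mod_of_dvd _ (dvd_mul_left n m)]
  have hle : n ≤ m * n := Nat.le_mul_of_pos_left n (by omega)
  have key : m * n - 1 = (m - 1) * n + (n - 1) := by
    have h2 : (m - 1) * n = m * n - n := by rw [Nat.sub_mul, one_mul]
    omega
  rw [key, add_assoc, add_comm ((m-1)*n) _, Nat.add_mul_mod_self_right, Nat.add_mod_mod]


lemma sum_pairs {n K : ℕ} (T : Finset (Fin n)) (x : Fin n → Fin (K + 1))
    (hx : ∀ i, (x i : ℕ) = if i ∈ T then 1 else 0) :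
    ∑ p ∈ Finset.univ.filter (fun p : Fin n × Fin n => p.1 < p.2),
      ((x p.1 : ℤ) - (x p.2 : ℤ)).natAbs = T.card * (n - T.card) := by
  classical
  set g : Fin n × Fin n → ℕ := fun p => ((x p.1 : ℤ) - (x p.2 : ℤ)).natAbs with hgdef
  have hg : ∀ p : Fin n × Fin n, g p = if (p.1 ∈ T ↔ p.2 ∈ T) then 0 else 1 := by
    intro p
    have e1 : (x p.1 : ℤ) = ((x p.1 : ℕ) : ℤ) := rfl
    have e2 : (x p.2 : ℤ) = ((x p.2 : ℕ) : ℤ) := rfl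
    by_cases h1 : p.1 ∈ T <;> by_cases h2 : p.2 ∈ T <;>
      simp [hgdef, e1, e2, hx p.1, hx p.2, h1, h2]
  -- total sum over all ordered pairs
  have htot : ∑ p : Fin n × Fin n, g p = 2 * (T.card * (n - T.card)) := by
    rw [Fintype.sum_prod_type]
    have inner : ∀ a : Fin n, ∑ b : Fin n, g (a, b)
        = if a ∈ T then (n - T.card) else T.card := by
      intro a
      by_cases ha : a ∈ T
      · rw [if_pos ha]
        have : ∀ b : Fin n, g (a, b) = if b ∉ T then 1 else 0 := by
          intro b; rw [hg]; by_cases hb : b ∈ T <;> simp [ha, hb]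
        rw [Finset.sum_congr rfl (fun b _ => this b), Finset.sum_boole]
        rw [Finset.filter_not, Finset.filter_univ_mem]
        simp [Finset.card_sdiff_of_subset (Finset.subset_univ T)]
      · rw [if_neg ha]
        have : ∀ b : Fin n, g (a, b) = if b ∈ T then 1 else 0 := by
          intro b; rw [hg]; by_cases hb : b ∈ T <;> simp [ha, hb]
        rw [Finset.sum_congr rfl (fun b _ => this b), Finset.sum_boole]
        rw [Finset.filter_univ_mem]
        simp
    rw [Finset.sum_congr rfl (fun a _ => inner a), Finset.sum_ite, Finset.sum_const, Finset.sum_const]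
    rw [Finset.filter_univ_mem, Finset.filter_not, Finset.filter_univ_mem]
    have hcard : (Finset.univ \ T).card = n - T.card := by
      simp [Finset.card_sdiff_of_subset (Finset.subset_univ T)]
    rw [hcard, smul_eq_mul, smul_eq_mul]
    ring
  -- split total into <, >, = parts
  have hsplit : ∑ p : Fin n × Fin n, g p
      = (∑ p ∈ Finset.univ.filter (fun p : Fin n × Fin n => p.1 < p.2), g p)
      + (∑ p ∈ Finset.univ.filter (fun p : Fin n × Fin n => ¬ p.1 < p.2), g p) :=
    (Finset.sum_filter_add_sum_filter_not _ _ _).symm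
  have hswap : ∑ p ∈ Finset.univ.filter (fun p : Fin n × Fin n => p.2 < p.1), g p
      = ∑ p ∈ Finset.univ.filter (fun p : Fin n × Fin n => p.1 < p.2), g p := by
    apply Finset.sum_equiv (Equiv.prodComm (Fin n) (Fin n))
    · intro p; simp [Equiv.prodComm]
    · intro p hp
      rw [hg, hg]
      simp only [Equiv.prodComm_apply, Prod.fst_swap, Prod.snd_swap]
      by_cases h1 : p.1 ∈ T <;> by_cases h2 : p.2 ∈ T <;> simp [h1, h2]
  have hrest : ∑ p ∈ Finset.univ.filter (fun p : Fin n × Fin n => ¬ p.1 < p.2), g p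
      = ∑ p ∈ Finset.univ.filter (fun p : Fin n × Fin n => p.2 < p.1), g p := by
    rw [← Finset.sum_filter_add_sum_filter_not
      (Finset.univ.filter (fun p : Fin n × Fin n => ¬ p.1 < p.2))
      (fun p : Fin n × Fin n => p.2 < p.1) g]
    have h1 : (Finset.univ.filter (fun p : Fin n × Fin n => ¬ p.1 < p.2)).filter
        (fun p => p.2 < p.1) = Finset.univ.filter (fun p : Fin n × Fin n => p.2 < p.1) := by
      rw [Finset.filter_filter]
      apply Finset.filter_congr
      intro p _
      constructor
      · rintro ⟨_, h⟩; exact h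
      · intro h; exact ⟨lt_asymm h, h⟩
    have h2 : ∑ p ∈ (Finset.univ.filter (fun p : Fin n × Fin n => ¬ p.1 < p.2)).filter
        (fun p => ¬ p.2 < p.1), g p = 0 := by
      apply Finset.sum_eq_zero
      intro p hp
      simp only [Finset.mem_filter] at hp
      have : p.1 = p.2 := le_antisymm (not_lt.1 hp.2) (not_lt.1 hp.1.2)
      rw [hg]
      simp [this]
    rw [h1, h2, add_zero]
  have hfinal : (∑ p ∈ Finset.univ.filter (fun p : Fin n × Fin n => p.1 < p.2), g p) * 2
      = 2 * (T.card * (n - T.card)) := by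
    calc (∑ p ∈ Finset.univ.filter (fun p : Fin n × Fin n => p.1 < p.2), g p) * 2
        = (∑ p ∈ Finset.univ.filter (fun p : Fin n × Fin n => p.1 < p.2), g p)
          + (∑ p ∈ Finset.univ.filter (fun p : Fin n × Fin n => p.1 < p.2), g p) := by ring
      _ = (∑ p ∈ Finset.univ.filter (fun p : Fin n × Fin n => p.1 < p.2), g p)
          + (∑ p ∈ Finset.univ.filter (fun p : Fin n × Fin n => p.2 < p.1), g p) := by rw [hswap]
      _ = (∑ p ∈ Finset.univ.filter (fun p : Fin n × Fin n => p.1 < p.2), g p)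
          + (∑ p ∈ Finset.univ.filter (fun p : Fin n × Fin n => ¬ p.1 < p.2), g p) := by rw [hrest]
      _ = ∑ p : Fin n × Fin n, g p := hsplit.symm
      _ = 2 * (T.card * (n - T.card)) := htot
  have hgoal : (∑ p ∈ Finset.univ.filter (fun p : Fin n × Fin n => p.1 < p.2), g p)
      = T.card * (n - T.card) := by omega
  exact hgoal


end AggDiff

set_option maxHeartbeats 1000000 in
open AggDiff in
/-- the aggregate difference `(Σ_{i<j} |x_i - x_j|) mod k` is not
computable with infinite memory. -/
theorem aggregate_difference_not_computable (K k : ℕ) (hK : 1 ≤ K) (hk : 2 ≤ k) :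
    ¬ ComputableWithInfiniteMemory
      (fun n (x : Fin n → Fin (K + 1)) =>
        (((∑ p ∈ Finset.univ.filter (fun p : Fin n × Fin n => p.1 < p.2),
            ((x p.1 : ℤ) - (x p.2 : ℤ)).natAbs) : ℕ) : ZMod k)) := by
  classical
  rintro ⟨M, Z, A, hY, hM, hZ, hcomp⟩
  set n0 := k + 2 with hn0
  have hn03 : 3 ≤ n0 := by omega
  have h2n : 2 * n0 ≤ k * n0 := Nat.mul_le_mul_right n0 hk
  have hb3 : 3 ≤ k * n0 := by omega
  haveI : NeZero n0 := ⟨by omega⟩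
  haveI : NeZero (k * n0) := ⟨by omega⟩
  set xs : Fin n0 → Fin (K + 1) := fun i => if i = 0 then 1 else 0 with hxsdef
  have hone : ((1 : Fin (K + 1)) : ℕ) = 1 := by
    rw [Fin.val_one']; exact Nat.mod_eq_of_lt (by omega)
  -- value on the small cycle
  have hxs : ∀ i, (xs i : ℕ) = if i ∈ ({(0 : Fin n0)} : Finset (Fin n0)) then 1 else 0 := by
    intro i; by_cases h : i = 0 <;> simp [hxsdef, h, hone] <;> all_goals omega
  have hsum1 : ∑ p ∈ Finset.univ.filter (fun p : Fin n0 × Fin n0 => p.1 < p.2),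
      ((xs p.1 : ℤ) - (xs p.2 : ℤ)).natAbs = 1 * (n0 - 1) := by
    rw [sum_pairs _ _ hxs, Finset.card_singleton]
  -- value on the big cycle
  set Tb : Finset (Fin (k * n0)) := Finset.univ.filter (fun i => i.val % n0 = 0) with hTbdef
  have hphi0iff : ∀ i : Fin (k * n0), phi k n0 (by omega) i = 0 ↔ i.val % n0 = 0 := by
    intro i
    rw [Fin.ext_iff]
    show i.val % n0 = (0 : Fin n0).val ↔ _
    simp
  have hxb : ∀ i : Fin (k * n0),
      ((xs (phi k n0 (by omega) i)) : ℕ) = if i ∈ Tb then 1 else 0 := by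
    intro i
    by_cases h : i.val % n0 = 0
    · rw [if_pos (by simp [hTbdef, h])]
      rw [show phi k n0 (by omega) i = 0 from (hphi0iff i).2 h]
      simp [hxsdef, hone]
      all_goals omega
    · rw [if_neg (by simp [hTbdef, h])]
      have : phi k n0 (by omega) i ≠ 0 := fun hc => h ((hphi0iff i).1 hc)
      simp [hxsdef, this]
  have hTbcard : Tb.card = k := by
    have hbij : Tb.card = (Finset.univ : Finset (Fin k)).card := by
      apply Finset.card_bij' (fun a _ => (⟨a.val / n0, by
          have ha : a.val < k * n0 := a.isLt
          rw [Nat.div_lt_iff_lt_mul (by omega : 0 < n0)]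
          exact ha⟩ : Fin k))
        (fun b _ => (⟨b.val * n0,
          mul_lt_mul_of_pos_right b.isLt (by omega : 0 < n0)⟩ : Fin (k * n0)))
      · intro a ha
        simp only [hTbdef, Finset.mem_filter] at ha
        apply Fin.ext
        show a.val / n0 * n0 = a.val
        exact Nat.div_mul_cancel (Nat.dvd_of_mod_eq_zero ha.2)
      · intro b hb
        apply Fin.ext
        show b.val * n0 / n0 = b.val
        exact Nat.mul_div_cancel _ (by omega : 0 < n0)
      · intro a ha
        simp
      · intro b hb
        simp [hTbdef, Nat.mul_mod_left]
    simpa using hbij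
  have hsum2 : ∑ p ∈ Finset.univ.filter (fun p : Fin (k * n0) × Fin (k * n0) => p.1 < p.2),
      (((xs (phi k n0 (by omega) p.1)) : ℤ) - ((xs (phi k n0 (by omega) p.2)) : ℤ)).natAbs
      = k * (k * n0 - k) := by
    rw [sum_pairs Tb _ hxb, hTbcard]
  -- run the algorithm on both cycles
  obtain ⟨t1, ht1⟩ := hcomp n0 (by omega) (cycle hn03) xs
  obtain ⟨t2, ht2⟩ := hcomp (k * n0) (by omega) (cycle hb3)
    (fun j => xs (phi k n0 (by omega) j))
  set t := max t1 t2 with htdef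
  have e1 := ht1 t (le_max_left _ _) 0
  have e2 := ht2 t (le_max_right _ _) 0
  have hbis := bisim A hb3 hn03 (phi k n0 (by omega))
    (fun i => phi_add (by omega) (by omega) i) (fun i => phi_sub (by omega) (by omega) i)
    xs t 0
  have hy : (A.run (cycle hb3) (fun j => xs (phi k n0 (by omega) j)) t 0).2.1
      = (A.run (cycle hn03) xs t (phi k n0 (by omega) 0)).2.1 := by
    rw [← cast2_y (cycle_deg hb3 0), ← cast2_y (cycle_deg hn03 (phi k n0 (by omega) 0)), hbis]
  have hphi0 : phi k n0 (by omega) (0 : Fin (k * n0)) = 0 := by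
    apply (hphi0iff 0).2
    show (0 : Fin (k * n0)).val % n0 = 0
    simp
  rw [hphi0] at hy
  rw [e2, e1] at hy
  -- hy equates the two function values in ZMod k
  beta_reduce at hy
  rw [hsum1, hsum2] at hy
  haveI : Fact (1 < k) := ⟨by omega⟩
  have hzero : ((k * (k * n0 - k) : ℕ) : ZMod k) = 0 := by
    push_cast
    rw [ZMod.natCast_self]
    ring
  have honez : ((1 * (n0 - 1) : ℕ) : ZMod k) = 1 := by
    rw [one_mul, show n0 - 1 = k + 1 from by omega]
    push_cast
    rw [ZMod.natCast_self]
    ring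
  rw [hzero, honez] at hy
  exact zero_ne_one hy
end

section
/- Let X = {1,…,K} and let I, I' be arbitrary subsets of X. The family of functions (f_n : X^n → {0,1})_{n≥1} defined by f_n(x) = 1 if |{i : x_i ∈ I}| ≥ |{i : x_i ∈ I'}| and f_n(x) = 0 otherwise, is computable. -/
namespace Stmt17

inductive Sp : Type where
  | pl : Sp
  | mi : Sp
  | pr : Sp
  deriving DecidableEq

instance : Fintype Sp :=
  ⟨{.pl, .mi, .pr}, by intro x; cases x <;> decide⟩

/-- message alphabet: which species' tokens are present on the port. -/
abbrev Msg : Type := Sp → Bool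

/-- node state -/
structure NS (d : ℕ) where
  started : Bool
  neg : Bool
  charge : Bool
  hold : Sp → Bool
  rot : Sp → Fin (d + 1)
  deriving DecidableEq

instance (d : ℕ) : Finite (NS d) := by
  apply Finite.of_injective
    (fun s : NS d => (s.started, s.neg, s.charge, s.hold, s.rot))
  intro a b h
  cases a; cases b; simp_all

/-- rotor advance, semantically mod `d` (junk if `d = 0`). -/
def rotAdd (d : ℕ) (ρ : Fin (d + 1)) (e : ℕ) : Fin (d + 1) :=
  if h : 0 < d then ⟨(ρ.val + e) % d, lt_trans (Nat.mod_lt _ h) (Nat.lt_succ_self d)⟩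
  else ρ

/-- whether port `k` is used when emitting `e` tokens starting from rotor `ρ`. -/
def portUsed (d : ℕ) (ρ : Fin (d + 1)) (e : ℕ) (k : Fin d) : Bool :=
  decide (∃ m < e, (ρ.val + m) % d = k.val)

def rawCount {d : ℕ} (inc : Fin d → Msg) (s : Sp) : ℕ :=
  (Finset.univ.filter fun k => inc k s = true).card

def initNS (d : ℕ) (xa xb : Bool) : NS d :=
  { started := true, neg := xb, charge := xa,
    hold := fun s => match s with
      | .pl => xa
      | .mi => xb
      | .pr => true,
    rot := fun _ => ⟨0, Nat.succ_pos d⟩ }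

def effSt {d : ℕ} (xa xb : Bool) (z : NS d) : NS d :=
  if z.started then z else initNS d xa xb

def inEff (stneg stcharge : Bool) (raw : Sp → ℕ) : Sp → ℕ := fun s =>
  match s with
  | .pl => raw .pl - (if stneg = true ∧ 0 < raw .pl then 1 else 0)
  | .mi => raw .mi - (if stcharge = true ∧ 0 < raw .mi then 1 else 0)
  | .pr => if stneg = true then 0 else raw .pr

def Hval {d : ℕ} (st : NS d) (raw : Sp → ℕ) : Sp → ℕ := fun s =>
  (st.hold s).toNat + inEff st.neg st.charge raw s +
    (if s = .pr ∧ st.neg = true ∧ 0 < raw .pl then 1 else 0)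

def step (d : ℕ) (xa xb : Bool) (z : NS d) (y : Fin 2) (inc : Fin d → Msg) :
    NS d × Fin 2 × (Fin d → Msg) :=
  let st := effSt xa xb z
  let raw := rawCount inc
  let Hv := Hval st raw
  ⟨{ started := true
     neg := st.neg && !(decide (0 < raw .pl))
     charge := st.charge && !(decide (0 < raw .mi))
     hold := fun s => decide (d < Hv s)
     rot := fun s => rotAdd d (st.rot s) (min (Hv s) d) },
   if d = 0 then (if st.neg then 0 else 1)
   else if 0 < raw .mi then 0 else if 0 < raw .pr then 1 else y,
   fun k s => portUsed d (st.rot s) (min (Hv s) d) k⟩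

def algo (K : ℕ) (I I' : Finset (Fin K)) : Algorithm (Fin K) (Fin 2) Msg (fun d => NS d) where
  trans := fun d x z y inc => step d (decide (x ∈ I \ I')) (decide (x ∈ I' \ I)) z y inc
  z0 := fun d => { started := false, neg := false, charge := false,
                   hold := fun _ => false, rot := fun _ => ⟨0, Nat.succ_pos d⟩ }
  y0 := 0
  m0 := fun _ => false

end Stmt17

namespace Stmt17

lemma rawCount_le {d : ℕ} (inc : Fin d → Msg) (s : Sp) : rawCount inc s ≤ d := by
  classical
  calc rawCount inc s ≤ (Finset.univ : Finset (Fin d)).card := Finset.card_filter_le _ _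
  _ = d := by simp

lemma inEff_le (a b : Bool) (raw : Sp → ℕ) (s : Sp) : inEff a b raw s ≤ raw s := by
  cases s <;> simp only [inEff] <;> split <;> omega

lemma Hval_le {d : ℕ} (hd : 0 < d) (st : NS d) (raw : Sp → ℕ) (hraw : ∀ s, raw s ≤ d) (s : Sp) :
    Hval st raw s ≤ d + 1 := by
  have h1 := inEff_le st.neg st.charge raw s
  have h2 := hraw s
  have h3 : (st.hold s).toNat ≤ 1 := Bool.toNat_le _
  by_cases hc : s = Sp.pr ∧ st.neg = true ∧ 0 < raw .pl
  · obtain ⟨rfl, hneg, hpl⟩ := hc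
    have h0 : inEff st.neg st.charge raw Sp.pr = 0 := by simp [inEff, hneg]
    simp only [Hval, h0]
    split <;> omega
  · simp only [Hval, if_neg hc]
    omega

lemma hold_toNat_eq {d : ℕ} (H : ℕ) (hH : H ≤ d + 1) :
    (decide (d < H) : Bool).toNat = H - min H d := by
  by_cases h : d < H
  · simp [h]; omega
  · simp [h]; omega

lemma portUsed_card {d : ℕ} (hd : 0 < d) (ρ : Fin (d+1)) (e : ℕ) (he : e ≤ d) :
    (Finset.univ.filter fun k : Fin d => portUsed d ρ e k = true).card = e := by
  classical
  have : (Finset.univ.filter fun k : Fin d => portUsed d ρ e k = true) =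
      (Finset.range e).image (fun m => (⟨(ρ.val + m) % d, Nat.mod_lt _ hd⟩ : Fin d)) := by
    ext k
    simp only [Finset.mem_filter, Finset.mem_univ, true_and, Finset.mem_image,
      Finset.mem_range, portUsed, decide_eq_true_eq]
    constructor
    · rintro ⟨m, hm, hk⟩; exact ⟨m, hm, Fin.ext hk⟩
    · rintro ⟨m, hm, hk⟩; exact ⟨m, hm, congrArg Fin.val hk⟩
  rw [this, Finset.card_image_of_injOn, Finset.card_range]
  intro m₁ h₁ m₂ h₂ hmk
  simp only [Finset.coe_range, Set.mem_Iio] at h₁ h₂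
  have : (ρ.val + m₁) % d = (ρ.val + m₂) % d := congrArg Fin.val hmk
  have hmod : m₁ % d = m₂ % d := by
    have := Nat.ModEq.add_left_cancel' ρ.val (this : (ρ.val + m₁) % d = (ρ.val + m₂) % d)
    exact this
  rwa [Nat.mod_eq_of_lt (lt_of_lt_of_le h₁ he), Nat.mod_eq_of_lt (lt_of_lt_of_le h₂ he)] at hmod

lemma sum_portUsed {d : ℕ} (hd : 0 < d) (ρ : Fin (d+1)) (e : ℕ) (he : e ≤ d) :
    ∑ k : Fin d, (portUsed d ρ e k).toNat = e := by
  classical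
  calc ∑ k : Fin d, (portUsed d ρ e k).toNat
      = ∑ k ∈ Finset.univ.filter (fun k : Fin d => portUsed d ρ e k = true), 1 := by
        rw [Finset.sum_filter]
        apply Finset.sum_congr rfl
        intro k _
        cases h : portUsed d ρ e k <;> simp
  _ = e := by rw [Finset.sum_const, smul_eq_mul, mul_one, portUsed_card hd ρ e he]

end Stmt17

namespace Stmt17

lemma exists_partial (e : ℕ → ℕ) : ∀ (p t : ℕ), t < ∑ u ∈ Finset.range p, e u →
    ∃ u < p, (∑ v ∈ Finset.range u, e v) ≤ t ∧ t < (∑ v ∈ Finset.range u, e v) + e u := by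
  intro p
  induction p with
  | zero => intro t ht; simp at ht
  | succ p ih =>
    intro t ht
    rcases Nat.lt_or_ge t (∑ u ∈ Finset.range p, e u) with h | h
    · obtain ⟨u, hu, h1, h2⟩ := ih t h
      exact ⟨u, Nat.lt_succ_of_lt hu, h1, h2⟩
    · refine ⟨p, Nat.lt_succ_self _, h, ?_⟩
      rw [Finset.sum_range_succ] at ht
      omega

lemma rotor_coverage (d p : ℕ) (hd : 0 < d) (r e : ℕ → ℕ)
    (hrec : ∀ u < p, r (u + 1) = (r u + e u) % d)
    (hr0 : r 0 < d) (hret : r p = r 0)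
    (hpos : 0 < ∑ u ∈ Finset.range p, e u) :
    ∀ k < d, ∃ u < p, ∃ m < e u, (r u + m) % d = k := by
  set S : ℕ → ℕ := fun u => ∑ v ∈ Finset.range u, e v with hS
  have claim1 : ∀ u ≤ p, r u = (r 0 + S u) % d := by
    intro u
    induction u with
    | zero => intro _; simp [hS, Nat.mod_eq_of_lt hr0]
    | succ u ih =>
      intro hu
      have h1 := ih (Nat.le_of_succ_le hu)
      rw [hrec u (Nat.lt_of_succ_le hu), h1, Nat.mod_add_mod]
      have : r 0 + S u + e u = r 0 + S (u + 1) := by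
        simp only [hS, Finset.sum_range_succ]; ring
      rw [this]
  have hmod0 : S p % d = 0 := by
    have h2 : (r 0 + S p % d) % d = r 0 := by
      rw [Nat.add_mod_mod]; rw [claim1 p le_rfl] at hret; exact hret
    have hlt : S p % d < d := Nat.mod_lt _ hd
    rcases Nat.lt_or_ge (r 0 + S p % d) d with h | h
    · rw [Nat.mod_eq_of_lt h] at h2; omega
    · have h3 : (r 0 + S p % d) % d = r 0 + S p % d - d := by
        rw [Nat.mod_eq_sub_mod h, Nat.mod_eq_of_lt] ; omega
      omega
  have hSp : d ≤ S p := Nat.le_of_dvd hpos (Nat.dvd_of_mod_eq_zero hmod0)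
  intro k hk
  set t := (k + (d - r 0)) % d with ht
  have htlt : t < d := Nat.mod_lt _ hd
  have hkey : (r 0 + t) % d = k := by
    rw [ht, Nat.add_mod_mod]
    have : r 0 + (k + (d - r 0)) = k + d := by omega
    rw [this, Nat.add_mod_right, Nat.mod_eq_of_lt hk]
  have hSp' : t < ∑ u ∈ Finset.range p, e u := lt_of_lt_of_le htlt hSp
  obtain ⟨u, hu, h1, h2⟩ := exists_partial e p t hSp'
  have hSu : (∑ v ∈ Finset.range u, e v) = S u := rfl
  rw [hSu] at h1 h2
  refine ⟨u, hu, t - S u, by omega, ?_⟩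
  rw [claim1 u (le_of_lt hu), Nat.mod_add_mod]
  have : r 0 + S u + (t - S u) = r 0 + t := by omega
  rw [this, hkey]

end Stmt17

namespace Stmt17

structure Ctx (K n : ℕ) where
  I : Finset (Fin K)
  I' : Finset (Fin K)
  N : PortNetwork n
  x : Fin n → Fin K

namespace Ctx

variable {K n : ℕ} (c : Ctx K n)

def R (t : ℕ) (i : Fin n) : NS (c.N.deg i) × Fin 2 × (Fin (c.N.deg i) → Msg) :=
  (algo K c.I c.I').run c.N c.x t i

def st (t : ℕ) (i : Fin n) : NS (c.N.deg i) := (c.R t i).1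
def yv (t : ℕ) (i : Fin n) : Fin 2 := (c.R t i).2.1
def buf (t : ℕ) (i : Fin n) : Fin (c.N.deg i) → Msg := (c.R t i).2.2
def xa (i : Fin n) : Bool := decide (c.x i ∈ c.I \ c.I')
def xb (i : Fin n) : Bool := decide (c.x i ∈ c.I' \ c.I)

def inc (t : ℕ) (i : Fin n) : Fin (c.N.deg i) → Msg := fun k =>
  (c.R t ((c.N.port i).symm k).1).2.2
    (c.N.port ((c.N.port i).symm k).1 ⟨i, c.N.symm _ _ ((c.N.port i).symm k).2⟩)

lemma run_succ (t : ℕ) (i : Fin n) :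
    c.R (t + 1) i =
      step (c.N.deg i) (c.xa i) (c.xb i) (c.st t i) (c.yv t i) (c.inc t i) := rfl

/-- effective state entering round `t+1` -/
def est (t : ℕ) (i : Fin n) : NS (c.N.deg i) := effSt (c.xa i) (c.xb i) (c.st t i)

def rawN (t : ℕ) (i : Fin n) (s : Sp) : ℕ := rawCount (c.inc t i) s
def Hv (t : ℕ) (i : Fin n) (s : Sp) : ℕ := Hval (c.est t i) (rawCount (c.inc t i)) s
def Em (t : ℕ) (i : Fin n) (s : Sp) : ℕ := min (c.Hv t i s) (c.N.deg i)
def heldN (t : ℕ) (i : Fin n) (s : Sp) : ℕ := ((c.st t i).hold s).toNat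
def bufN (t : ℕ) (i : Fin n) (k : Fin (c.N.deg i)) (s : Sp) : ℕ := ((c.buf t i k) s).toNat

lemma started_succ (t : ℕ) (i : Fin n) : (c.st (t + 1) i).started = true := rfl

lemma est_succ (t : ℕ) (i : Fin n) : c.est (t + 1) i = c.st (t + 1) i := by
  simp [est, effSt, started_succ]

lemma st_zero (i : Fin n) : c.st 0 i = (algo K c.I c.I').z0 _ := rfl

lemma est_zero (i : Fin n) : c.est 0 i = initNS (c.N.deg i) (c.xa i) (c.xb i) := by
  simp [est, st_zero, effSt, algo]

lemma inc_zero (t : ℕ) (i : Fin n) (k : Fin (c.N.deg i)) : c.inc 0 i k = fun _ => false := rfl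

lemma rawN_zero (i : Fin n) (s : Sp) : c.rawN 0 i s = 0 := by
  simp [rawN, rawCount, inc_zero]

lemma rawN_le (t : ℕ) (i : Fin n) (s : Sp) : c.rawN t i s ≤ c.N.deg i := rawCount_le _ _

-- step component lemmas
lemma neg_succ (t : ℕ) (i : Fin n) :
    (c.st (t + 1) i).neg = ((c.est t i).neg && !(decide (0 < c.rawN t i .pl))) := rfl

lemma charge_succ (t : ℕ) (i : Fin n) :
    (c.st (t + 1) i).charge = ((c.est t i).charge && !(decide (0 < c.rawN t i .mi))) := rfl

lemma rot_succ (t : ℕ) (i : Fin n) (s : Sp) :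
    (c.st (t + 1) i).rot s = rotAdd (c.N.deg i) ((c.est t i).rot s) (c.Em t i s) := rfl

lemma buf_succ (t : ℕ) (i : Fin n) (k : Fin (c.N.deg i)) (s : Sp) :
    c.buf (t + 1) i k s = portUsed (c.N.deg i) ((c.est t i).rot s) (c.Em t i s) k := rfl

lemma hold_succ (t : ℕ) (i : Fin n) (s : Sp) :
    (c.st (t + 1) i).hold s = decide (c.N.deg i < c.Hv t i s) := rfl

lemma yv_succ (t : ℕ) (i : Fin n) :
    c.yv (t + 1) i = if c.N.deg i = 0 then (if (c.est t i).neg then 0 else 1)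
      else if 0 < c.rawN t i .mi then 0
      else if 0 < c.rawN t i .pr then 1 else c.yv t i := rfl

lemma Hv_le (t : ℕ) (i : Fin n) (s : Sp) (hd : 0 < c.N.deg i) :
    c.Hv t i s ≤ c.N.deg i + 1 :=
  Hval_le hd _ _ (fun s => rawCount_le _ s) s

lemma heldN_succ (t : ℕ) (i : Fin n) (s : Sp) (hd : 0 < c.N.deg i) :
    c.heldN (t + 1) i s = c.Hv t i s - c.Em t i s := by
  rw [heldN, hold_succ, hold_toNat_eq _ (c.Hv_le t i s hd)]
  rfl

lemma sum_bufN_succ (t : ℕ) (i : Fin n) (s : Sp) (hd : 0 < c.N.deg i) :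
    ∑ k, c.bufN (t + 1) i k s = c.Em t i s := by
  have : ∀ k, c.bufN (t + 1) i k s = (portUsed (c.N.deg i) ((c.est t i).rot s) (c.Em t i s) k).toNat := by
    intro k; rw [bufN, buf_succ]
  simp only [this]
  exact sum_portUsed hd _ _ (min_le_right _ _)

lemma local_conserve (t : ℕ) (i : Fin n) (s : Sp) (hd : 0 < c.N.deg i) :
    c.heldN (t + 1) i s + ∑ k, c.bufN (t + 1) i k s = c.Hv t i s := by
  rw [heldN_succ c t i s hd, sum_bufN_succ c t i s hd, Em]
  omega

end Ctx
end Stmt17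

namespace Stmt17
namespace Ctx

variable {K n : ℕ} (c : Ctx K n)

lemma deg_pos (hn : 2 ≤ n) (i : Fin n) : 0 < c.N.deg i := by
  have h1 : 1 < Fintype.card (Fin n) := by simp; omega
  obtain ⟨j, hj⟩ := Fintype.exists_ne_of_one_lt_card h1 i
  rcases (Relation.ReflTransGen.cases_head (c.N.connected i j)) with h | ⟨b, hb, _⟩
  · exact absurd h.symm hj
  · have : 0 < Fintype.card {j // c.N.adj i j} := Fintype.card_pos_iff.mpr ⟨⟨b, hb⟩⟩
    exact this

def arcFlip (a : Σ i : Fin n, Fin (c.N.deg i)) : Σ i : Fin n, Fin (c.N.deg i) :=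
  ⟨((c.N.port a.1).symm a.2).1,
    c.N.port ((c.N.port a.1).symm a.2).1 ⟨a.1, c.N.symm _ _ ((c.N.port a.1).symm a.2).2⟩⟩

def valArc (a : Σ i : Fin n, Fin (c.N.deg i)) : ℕ × ℕ := (a.1.val, a.2.val)

lemma valArc_inj (a b : Σ i : Fin n, Fin (c.N.deg i)) (h : c.valArc a = c.valArc b) : a = b := by
  obtain ⟨i, k⟩ := a
  obtain ⟨j, l⟩ := b
  simp only [valArc, Prod.mk.injEq] at h
  obtain ⟨h1, h2⟩ := h
  have : i = j := Fin.ext h1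
  subst this
  have : k = l := Fin.ext h2
  subst this
  rfl

lemma arcFlip_invol (a : Σ i : Fin n, Fin (c.N.deg i)) : c.arcFlip (c.arcFlip a) = a := by
  obtain ⟨i, k⟩ := a
  apply c.valArc_inj
  set X : Fin n := ((c.N.port i).symm k).1 with hX
  have pf : c.N.adj i X := ((c.N.port i).symm k).2
  have e1 : (c.N.port X).symm (c.N.port X ⟨i, c.N.symm _ _ pf⟩) = ⟨i, c.N.symm _ _ pf⟩ :=
    Equiv.symm_apply_apply _ _
  have hflip1 : c.arcFlip ⟨i, k⟩ = ⟨X, c.N.port X ⟨i, c.N.symm _ _ pf⟩⟩ := rfl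
  rw [hflip1]
  have hflip2 : c.valArc (c.arcFlip ⟨X, c.N.port X ⟨i, c.N.symm _ _ pf⟩⟩)
      = (i.val, (c.N.port i ⟨X, c.N.symm _ _ (c.N.symm _ _ pf)⟩).val) :=
    congrArg (fun (A : {l // c.N.adj X l = true}) =>
      ((A.1.val, (c.N.port A.1 ⟨X, c.N.symm _ _ A.2⟩).val) : ℕ × ℕ)) e1
  rw [hflip2]
  show (i.val, (c.N.port i ⟨X, c.N.symm _ _ (c.N.symm _ _ pf)⟩).val) = (i.val, k.val)
  have h2 : (⟨X, c.N.symm _ _ (c.N.symm _ _ pf)⟩ : {l // c.N.adj i l}) = (c.N.port i).symm k :=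
    Subtype.ext rfl
  rw [h2]
  exact congrArg (fun z : Fin _ => (i.val, z.val)) ((c.N.port i).apply_symm_apply k)

def arcEquiv : (Σ i : Fin n, Fin (c.N.deg i)) ≃ (Σ i : Fin n, Fin (c.N.deg i)) :=
  ⟨c.arcFlip, c.arcFlip, c.arcFlip_invol, c.arcFlip_invol⟩

lemma inc_eq_buf (t : ℕ) (i : Fin n) (k : Fin (c.N.deg i)) :
    c.inc t i k = c.buf t (c.arcFlip ⟨i, k⟩).1 (c.arcFlip ⟨i, k⟩).2 := rfl

lemma rawCount_eq_sum {d : ℕ} (inc : Fin d → Msg) (s : Sp) :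
    rawCount inc s = ∑ k, (inc k s).toNat := by
  rw [rawCount, Finset.card_filter]
  apply Finset.sum_congr rfl
  intro k _
  cases h : inc k s <;> simp [h]

lemma sum_rawN (t : ℕ) (s : Sp) :
    ∑ i, c.rawN t i s = ∑ i, ∑ k, c.bufN t i k s := by
  have h1 : ∀ i, c.rawN t i s = ∑ k, c.bufN t (c.arcFlip ⟨i, k⟩).1 (c.arcFlip ⟨i, k⟩).2 s := by
    intro i
    rw [rawN, rawCount_eq_sum]
    apply Finset.sum_congr rfl
    intro k _
    rw [inc_eq_buf]
    rfl
  simp only [h1]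
  rw [Finset.sum_sigma', Finset.sum_sigma']
  exact Equiv.sum_comp c.arcEquiv (fun a => c.bufN t a.1 a.2 s)

def Tot (t : ℕ) (s : Sp) : ℕ := ∑ i, (c.heldN t i s + ∑ k, c.bufN t i k s)
def NegC (t : ℕ) : ℕ := ∑ i, ((c.st t i).neg).toNat
def ChgC (t : ℕ) : ℕ := ∑ i, ((c.st t i).charge).toNat
def cAv : ℕ := ∑ i, (c.xa i).toNat
def cBv : ℕ := ∑ i, (c.xb i).toNat

def absN (t : ℕ) (i : Fin n) (s : Sp) : ℕ :=
  c.rawN t i s - inEff (c.est t i).neg (c.est t i).charge (rawCount (c.inc t i)) s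

def creN (t : ℕ) (i : Fin n) (s : Sp) : ℕ :=
  if s = Sp.pr ∧ (c.est t i).neg = true ∧ 0 < c.rawN t i .pl then 1 else 0

lemma inEff_add_absN (t : ℕ) (i : Fin n) (s : Sp) :
    inEff (c.est t i).neg (c.est t i).charge (rawCount (c.inc t i)) s + c.absN t i s
      = c.rawN t i s := by
  have h := inEff_le (c.est t i).neg (c.est t i).charge (rawCount (c.inc t i)) s
  have h2 : rawCount (c.inc t i) s = c.rawN t i s := rfl
  rw [absN]
  omega

lemma Hv_eq (t : ℕ) (i : Fin n) (s : Sp) :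
    c.Hv t i s = ((c.est t i).hold s).toNat +
      inEff (c.est t i).neg (c.est t i).charge (rawCount (c.inc t i)) s + c.creN t i s := rfl

lemma Tot_succ (t : ℕ) (s : Sp) (hd : ∀ i, 0 < c.N.deg i) (ht : 1 ≤ t) :
    c.Tot (t + 1) s + ∑ i, c.absN t i s = c.Tot t s + ∑ i, c.creN t i s := by
  obtain ⟨u, rfl⟩ : ∃ u, t = u + 1 := ⟨t - 1, by omega⟩
  have hest : ∀ i, c.est (u + 1) i = c.st (u + 1) i := fun i => c.est_succ u i
  have h2 : ∀ i : Fin n, c.Hv (u + 1) i s + c.absN (u + 1) i s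
      = c.heldN (u + 1) i s + c.rawN (u + 1) i s + c.creN (u + 1) i s := by
    intro i
    rw [Hv_eq]
    have h3 := c.inEff_add_absN (u + 1) i s
    have h4 : ((c.est (u + 1) i).hold s).toNat = c.heldN (u + 1) i s := by
      rw [hest i]; rfl
    omega
  calc c.Tot (u + 1 + 1) s + ∑ i, c.absN (u + 1) i s
      = (∑ i, c.Hv (u + 1) i s) + ∑ i, c.absN (u + 1) i s := by
        rw [Tot]
        congr 1
        exact Finset.sum_congr rfl fun i _ => c.local_conserve (u + 1) i s (hd i)
    _ = ∑ i, (c.Hv (u + 1) i s + c.absN (u + 1) i s) := (Finset.sum_add_distrib).symm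
    _ = ∑ i, (c.heldN (u + 1) i s + c.rawN (u + 1) i s + c.creN (u + 1) i s) := by
        exact Finset.sum_congr rfl fun i _ => h2 i
    _ = ((∑ i, c.heldN (u + 1) i s) + ∑ i, c.rawN (u + 1) i s) + ∑ i, c.creN (u + 1) i s := by
        rw [← Finset.sum_add_distrib, ← Finset.sum_add_distrib]
    _ = ((∑ i, c.heldN (u + 1) i s) + ∑ i, ∑ k, c.bufN (u + 1) i k s) + ∑ i, c.creN (u + 1) i s := by
        rw [c.sum_rawN (u + 1) s]
    _ = c.Tot (u + 1) s + ∑ i, c.creN (u + 1) i s := by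
        rw [Tot, ← Finset.sum_add_distrib]

end Ctx
end Stmt17

namespace Stmt17
namespace Ctx

variable {K n : ℕ} (c : Ctx K n)

-- base values at time 1
lemma Hv_zero (i : Fin n) (s : Sp) :
    c.Hv 0 i s = ((initNS (c.N.deg i) (c.xa i) (c.xb i)).hold s).toNat := by
  have hr : rawCount (c.inc 0 i) = fun s => 0 := by
    funext s; exact c.rawN_zero i s
  rw [Hv, est_zero, hr]
  cases s <;> simp [Hval, inEff]

lemma Tot_one (s : Sp) (hd : ∀ i, 0 < c.N.deg i) :
    c.Tot 1 s = ∑ i, ((initNS (c.N.deg i) (c.xa i) (c.xb i)).hold s).toNat := by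
  rw [Tot]
  refine Finset.sum_congr rfl fun i _ => ?_
  rw [c.local_conserve 0 i s (hd i), c.Hv_zero i s]

lemma Tot_one_pl (hd : ∀ i, 0 < c.N.deg i) : c.Tot 1 .pl = c.cAv := by
  rw [Tot_one c _ hd, cAv]; rfl

lemma Tot_one_mi (hd : ∀ i, 0 < c.N.deg i) : c.Tot 1 .mi = c.cBv := by
  rw [Tot_one c _ hd, cBv]; rfl

lemma Tot_one_pr (hd : ∀ i, 0 < c.N.deg i) : c.Tot 1 .pr = n := by
  rw [Tot_one c _ hd]
  simp [initNS]

lemma neg_one (i : Fin n) : (c.st 1 i).neg = c.xb i := by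
  rw [show (1:ℕ) = 0 + 1 from rfl, neg_succ, est_zero]
  have h := c.rawN_zero i .pl
  simp [initNS, h]

lemma charge_one (i : Fin n) : (c.st 1 i).charge = c.xa i := by
  rw [show (1:ℕ) = 0 + 1 from rfl, charge_succ, est_zero]
  have h := c.rawN_zero i .mi
  simp [initNS, h]

lemma NegC_one : c.NegC 1 = c.cBv := by
  rw [NegC, cBv]; exact Finset.sum_congr rfl fun i _ => by rw [neg_one]

lemma ChgC_one : c.ChgC 1 = c.cAv := by
  rw [ChgC, cAv]; exact Finset.sum_congr rfl fun i _ => by rw [charge_one]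

-- event indicators
def canI (t : ℕ) (i : Fin n) : ℕ :=
  if (c.est t i).neg = true ∧ 0 < c.rawN t i .pl then 1 else 0

def chgI (t : ℕ) (i : Fin n) : ℕ :=
  if (c.est t i).charge = true ∧ 0 < c.rawN t i .mi then 1 else 0

lemma absN_pl (t : ℕ) (i : Fin n) : c.absN t i .pl = c.canI t i := by
  have hr : rawCount (c.inc t i) Sp.pl = c.rawN t i .pl := rfl
  rw [absN, canI, inEff, hr]
  split <;> omega

lemma absN_mi (t : ℕ) (i : Fin n) : c.absN t i .mi = c.chgI t i := by
  have hr : rawCount (c.inc t i) Sp.mi = c.rawN t i .mi := rfl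
  rw [absN, chgI, inEff, hr]
  split <;> omega

lemma absN_pr (t : ℕ) (i : Fin n) :
    c.absN t i .pr = if (c.est t i).neg = true then c.rawN t i .pr else 0 := by
  have hr : rawCount (c.inc t i) Sp.pr = c.rawN t i .pr := rfl
  rw [absN, inEff, hr]
  split <;> omega

lemma creN_pr (t : ℕ) (i : Fin n) : c.creN t i .pr = c.canI t i := by
  rw [creN, canI]
  by_cases h : (c.est t i).neg = true ∧ 0 < c.rawN t i .pl
  · rw [if_pos ⟨rfl, h⟩, if_pos h]
  · rw [if_neg (by tauto), if_neg h]

lemma creN_pl (t : ℕ) (i : Fin n) : c.creN t i .pl = 0 := by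
  rw [creN, if_neg]; rintro ⟨h, -⟩; exact Sp.noConfusion h

lemma creN_mi (t : ℕ) (i : Fin n) : c.creN t i .mi = 0 := by
  rw [creN, if_neg]; rintro ⟨h, -⟩; exact Sp.noConfusion h

lemma neg_toNat_succ (t : ℕ) (i : Fin n) :
    ((c.st (t + 1) i).neg).toNat + c.canI t i = ((c.est t i).neg).toNat := by
  rw [neg_succ, canI]
  by_cases h1 : (c.est t i).neg = true
  · by_cases h2 : 0 < c.rawN t i .pl
    · rw [if_pos ⟨h1, h2⟩]
      have : decide (0 < c.rawN t i Sp.pl) = true := decide_eq_true h2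
      rw [h1, this]
      rfl
    · rw [if_neg (by tauto)]
      have : decide (0 < c.rawN t i Sp.pl) = false := decide_eq_false h2
      rw [h1, this]
      rfl
  · have h1' : (c.est t i).neg = false := by
      cases h : (c.est t i).neg
      · rfl
      · exact absurd h h1
    rw [if_neg (by tauto), h1']
    rfl

lemma charge_toNat_succ (t : ℕ) (i : Fin n) :
    ((c.st (t + 1) i).charge).toNat + c.chgI t i = ((c.est t i).charge).toNat := by
  rw [charge_succ, chgI]
  by_cases h1 : (c.est t i).charge = true
  · by_cases h2 : 0 < c.rawN t i .mi
    · rw [if_pos ⟨h1, h2⟩]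
      have : decide (0 < c.rawN t i Sp.mi) = true := decide_eq_true h2
      rw [h1, this]
      rfl
    · rw [if_neg (by tauto)]
      have : decide (0 < c.rawN t i Sp.mi) = false := decide_eq_false h2
      rw [h1, this]
      rfl
  · have h1' : (c.est t i).charge = false := by
      cases h : (c.est t i).charge
      · rfl
      · exact absurd h h1
    rw [if_neg (by tauto), h1']
    rfl

lemma NegC_succ (t : ℕ) (ht : 1 ≤ t) : c.NegC (t + 1) + ∑ i, c.canI t i = c.NegC t := by
  obtain ⟨u, rfl⟩ : ∃ u, t = u + 1 := ⟨t - 1, by omega⟩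
  rw [NegC, NegC, ← Finset.sum_add_distrib]
  refine Finset.sum_congr rfl fun i _ => ?_
  rw [neg_toNat_succ, est_succ]

lemma ChgC_succ (t : ℕ) (ht : 1 ≤ t) : c.ChgC (t + 1) + ∑ i, c.chgI t i = c.ChgC t := by
  obtain ⟨u, rfl⟩ : ∃ u, t = u + 1 := ⟨t - 1, by omega⟩
  rw [ChgC, ChgC, ← Finset.sum_add_distrib]
  refine Finset.sum_congr rfl fun i _ => ?_
  rw [charge_toNat_succ, est_succ]

-- the two conservation invariants
lemma invPl (hd : ∀ i, 0 < c.N.deg i) (t : ℕ) (ht : 1 ≤ t) :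
    c.Tot t .pl + c.cBv = c.NegC t + c.cAv := by
  induction t with
  | zero => omega
  | succ u ih =>
    rcases Nat.lt_or_ge u 1 with h | h
    · have : u = 0 := by omega
      subst this
      rw [c.Tot_one_pl hd, c.NegC_one]
      omega
    · have h1 := c.Tot_succ u .pl hd h
      have h2 := c.NegC_succ u h
      have h3 : ∀ i, c.absN u i .pl = c.canI u i := fun i => c.absN_pl u i
      have h4 : ∀ i, c.creN u i .pl = 0 := fun i => c.creN_pl u i
      have h5 : ∑ i, c.absN u i .pl = ∑ i, c.canI u i := Finset.sum_congr rfl fun i _ => h3 i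
      have h6 : ∑ i, c.creN u i .pl = 0 := by
        rw [Finset.sum_congr rfl fun i _ => h4 i]; simp
      have := ih h
      omega

lemma invMi (hd : ∀ i, 0 < c.N.deg i) (t : ℕ) (ht : 1 ≤ t) :
    c.Tot t .mi + c.cAv = c.ChgC t + c.cBv := by
  induction t with
  | zero => omega
  | succ u ih =>
    rcases Nat.lt_or_ge u 1 with h | h
    · have : u = 0 := by omega
      subst this
      rw [c.Tot_one_mi hd, c.ChgC_one]
      omega
    · have h1 := c.Tot_succ u .mi hd h
      have h2 := c.ChgC_succ u h
      have h5 : ∑ i, c.absN u i .mi = ∑ i, c.chgI u i :=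
        Finset.sum_congr rfl fun i _ => c.absN_mi u i
      have h6 : ∑ i, c.creN u i .mi = 0 := by
        rw [Finset.sum_congr rfl fun i _ => c.creN_mi u i]; simp
      have := ih h
      omega

end Ctx
end Stmt17

namespace Stmt17

lemma anti_of_succ_le (a : ℕ → ℕ) (T₀ : ℕ) (h : ∀ t, T₀ ≤ t → a (t + 1) ≤ a t) :
    ∀ u v, T₀ ≤ u → u ≤ v → a v ≤ a u := by
  intro u v hu huv
  induction v, huv using Nat.le_induction with
  | base => exact le_refl _
  | succ v hv ih => exact le_trans (h v (le_trans hu hv)) ih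

lemma stab_aux : ∀ (m : ℕ) (a : ℕ → ℕ) (T₀ : ℕ), a T₀ ≤ m →
    (∀ t, T₀ ≤ t → a (t + 1) ≤ a t) → ∃ T, T₀ ≤ T ∧ ∀ t, T ≤ t → a t = a T := by
  intro m
  induction m with
  | zero =>
    intro a T₀ h0 hmono
    refine ⟨T₀, le_rfl, fun t ht => ?_⟩
    have h1 := anti_of_succ_le a T₀ hmono T₀ t le_rfl ht
    omega
  | succ m ih =>
    intro a T₀ h0 hmono
    by_cases hc : ∀ t, T₀ ≤ t → a t = a T₀
    · exact ⟨T₀, le_rfl, fun t ht => by rw [hc t ht]⟩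
    · push_neg at hc
      obtain ⟨t1, ht1, hne⟩ := hc
      have hle := anti_of_succ_le a T₀ hmono T₀ t1 le_rfl ht1
      obtain ⟨T, hT, h⟩ := ih a t1 (by omega) (fun t ht => hmono t (le_trans ht1 ht))
      exact ⟨T, le_trans ht1 hT, h⟩

lemma stab (a : ℕ → ℕ) (T₀ : ℕ) (h : ∀ t, T₀ ≤ t → a (t + 1) ≤ a t) :
    ∃ T, T₀ ≤ T ∧ ∀ t, T ≤ t → a t = a T :=
  stab_aux (a T₀) a T₀ le_rfl h

namespace Ctx

variable {K n : ℕ} (c : Ctx K n)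

lemma exists_tail (hd : ∀ i, 0 < c.N.deg i) :
    ∃ T, 1 ≤ T ∧ (∀ t, T ≤ t → ∀ i, c.canI t i = 0) ∧
      (∀ t, T ≤ t → ∀ i, c.chgI t i = 0) ∧
      (∀ t, T ≤ t → ∀ i, c.absN t i .pr = 0) ∧
      (∀ t, T ≤ t → ∀ s, c.Tot t s = c.Tot T s) ∧
      (∀ t, T ≤ t → c.NegC t = c.NegC T) ∧
      (∀ t, T ≤ t → c.ChgC t = c.ChgC T) := by
  obtain ⟨T₁, hT₁, hN⟩ := stab c.NegC 1 (fun t ht => by have := c.NegC_succ t ht; omega)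
  obtain ⟨T₂, hT₂, hC⟩ := stab c.ChgC 1 (fun t ht => by have := c.ChgC_succ t ht; omega)
  have hcan : ∀ t, max T₁ T₂ ≤ t → ∀ i, c.canI t i = 0 := by
    intro t ht i
    have h1 := c.NegC_succ t (by omega)
    have h2 := hN t (by omega)
    have h3 := hN (t + 1) (by omega)
    have hsum : ∑ i, c.canI t i = 0 := by omega
    exact Finset.sum_eq_zero_iff.mp hsum i (Finset.mem_univ i)
  have hchg : ∀ t, max T₁ T₂ ≤ t → ∀ i, c.chgI t i = 0 := by
    intro t ht i
    have h1 := c.ChgC_succ t (by omega)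
    have h2 := hC t (by omega)
    have h3 := hC (t + 1) (by omega)
    have hsum : ∑ i, c.chgI t i = 0 := by omega
    exact Finset.sum_eq_zero_iff.mp hsum i (Finset.mem_univ i)
  have hprmono : ∀ t, max T₁ T₂ ≤ t → c.Tot (t + 1) .pr ≤ c.Tot t .pr := by
    intro t ht
    have h1 := c.Tot_succ t .pr hd (by omega)
    have h2 : ∑ i, c.creN t i .pr = 0 := by
      rw [Finset.sum_congr rfl fun i _ => by rw [c.creN_pr t i, hcan t ht i]]
      simp
    omega
  obtain ⟨T₃, hT₃, hPr⟩ := stab (fun t => c.Tot t .pr) (max T₁ T₂) hprmono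
  have habs : ∀ t, T₃ ≤ t → ∀ i, c.absN t i .pr = 0 := by
    intro t ht i
    have h1 := c.Tot_succ t .pr hd (by omega)
    have h2 : ∑ i, c.creN t i .pr = 0 := by
      rw [Finset.sum_congr rfl fun i _ => by rw [c.creN_pr t i, hcan t (by omega) i]]
      simp
    have h3 := hPr t ht
    have h4 := hPr (t + 1) (by omega)
    have hsum : ∑ i, c.absN t i .pr = 0 := by omega
    exact Finset.sum_eq_zero_iff.mp hsum i (Finset.mem_univ i)
  refine ⟨T₃, by omega, fun t ht i => hcan t (by omega) i,
    fun t ht i => hchg t (by omega) i, habs, ?_, ?_, ?_⟩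
  · -- totals constant
    intro t ht s
    induction t, ht using Nat.le_induction with
    | base => rfl
    | succ t ht ih =>
      have h1 := c.Tot_succ t s hd (by omega)
      have habs0 : ∑ i, c.absN t i s = 0 := by
        cases s
        · rw [Finset.sum_congr rfl fun i _ => by rw [c.absN_pl t i, hcan t (by omega) i]]; simp
        · rw [Finset.sum_congr rfl fun i _ => by rw [c.absN_mi t i, hchg t (by omega) i]]; simp
        · rw [Finset.sum_congr rfl fun i _ => habs t ht i]; simp
      have hcre0 : ∑ i, c.creN t i s = 0 := by
        cases s
        · rw [Finset.sum_congr rfl fun i _ => c.creN_pl t i]; simp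
        · rw [Finset.sum_congr rfl fun i _ => c.creN_mi t i]; simp
        · rw [Finset.sum_congr rfl fun i _ => by rw [c.creN_pr t i, hcan t (by omega) i]]; simp
      omega
  · intro t ht
    rw [hN t (by omega), hN T₃ (by omega)]
  · intro t ht
    rw [hC t (by omega), hC T₃ (by omega)]

-- periodicity
lemma run_ext (u v : ℕ) (h : ∀ j, c.R u j = c.R v j) (i : Fin n) :
    c.R (u + 1) i = c.R (v + 1) i := by
  rw [run_succ, run_succ]
  have hst : c.st u i = c.st v i := by rw [st, st, h i]
  have hy : c.yv u i = c.yv v i := by rw [yv, yv, h i]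
  have hinc : c.inc u i = c.inc v i := by
    funext k
    rw [inc, inc, h _]
  rw [hst, hy, hinc]

lemma exists_periodic (T0 : ℕ) :
    ∃ T, T0 ≤ T ∧ ∃ p, 0 < p ∧ ∀ t, T ≤ t → ∀ i, c.R (t + p) i = c.R t i := by
  have hfin : Finite (∀ i : Fin n, NS (c.N.deg i) × Fin 2 × (Fin (c.N.deg i) → Msg)) := by
    infer_instance
  have hni : ¬ Function.Injective (fun u : ℕ => (fun i => c.R (T0 + u) i)) := by
    intro hinj
    exact (Finite.of_injective _ hinj).false
  simp only [Function.Injective, not_forall] at hni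
  obtain ⟨a, b, hab, hne⟩ := hni
  rcases Nat.lt_or_ge a b with hlt | hge
  · refine ⟨T0 + a, by omega, b - a, by omega, ?_⟩
    have key : ∀ m, ∀ i, c.R (T0 + a + m + (b - a)) i = c.R (T0 + a + m) i := by
      intro m
      induction m with
      | zero =>
        intro i
        have h1 : T0 + a + 0 + (b - a) = T0 + b := by omega
        have h2 : T0 + a + 0 = T0 + a := by omega
        rw [h1, h2]
        exact (congrFun hab i).symm
      | succ m ih =>
        intro i
        have h1 : T0 + a + (m + 1) + (b - a) = (T0 + a + m + (b - a)) + 1 := by omega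
        have h2 : T0 + a + (m + 1) = (T0 + a + m) + 1 := by omega
        rw [h1, h2]
        exact c.run_ext _ _ ih i
    intro t ht i
    obtain ⟨m, rfl⟩ := Nat.exists_eq_add_of_le ht
    exact key m i
  · have hlt : b < a := by omega
    refine ⟨T0 + b, by omega, a - b, by omega, ?_⟩
    have key : ∀ m, ∀ i, c.R (T0 + b + m + (a - b)) i = c.R (T0 + b + m) i := by
      intro m
      induction m with
      | zero =>
        intro i
        have h1 : T0 + b + 0 + (a - b) = T0 + a := by omega
        have h2 : T0 + b + 0 = T0 + b := by omega
        rw [h1, h2]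
        exact (congrFun hab.symm i).symm
      | succ m ih =>
        intro i
        have h1 : T0 + b + (m + 1) + (a - b) = (T0 + b + m + (a - b)) + 1 := by omega
        have h2 : T0 + b + (m + 1) = (T0 + b + m) + 1 := by omega
        rw [h1, h2]
        exact c.run_ext _ _ ih i
    intro t ht i
    obtain ⟨m, rfl⟩ := Nat.exists_eq_add_of_le ht
    exact key m i

end Ctx
end Stmt17

namespace Stmt17
namespace Ctx

variable {K n : ℕ} (c : Ctx K n)

structure IsTail (c : Ctx K n) (Ts : ℕ) : Prop where
  one_le : 1 ≤ Ts
  can : ∀ t, Ts ≤ t → ∀ i, c.canI t i = 0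
  chg : ∀ t, Ts ≤ t → ∀ i, c.chgI t i = 0
  pabs : ∀ t, Ts ≤ t → ∀ i, c.absN t i .pr = 0

structure IsPer (c : Ctx K n) (T p : ℕ) : Prop where
  ppos : 0 < p
  per : ∀ t, T ≤ t → ∀ i, c.R (t + p) i = c.R t i

lemma inEff_eq_raw {Ts : ℕ} (htl : c.IsTail Ts) (t : ℕ) (ht : Ts ≤ t) (i : Fin n) (s : Sp) :
    inEff (c.est t i).neg (c.est t i).charge (rawCount (c.inc t i)) s = c.rawN t i s := by
  cases s with
  | pl =>
    have h := htl.can t ht i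
    rw [canI] at h
    show rawCount (c.inc t i) Sp.pl -
      (if (c.est t i).neg = true ∧ 0 < rawCount (c.inc t i) Sp.pl then 1 else 0) = _
    have hh : (if (c.est t i).neg = true ∧ 0 < c.rawN t i Sp.pl then 1 else 0) = 0 := h
    rw [show rawCount (c.inc t i) Sp.pl = c.rawN t i Sp.pl from rfl, hh]
    rfl
  | mi =>
    have h := htl.chg t ht i
    rw [chgI] at h
    show rawCount (c.inc t i) Sp.mi -
      (if (c.est t i).charge = true ∧ 0 < rawCount (c.inc t i) Sp.mi then 1 else 0) = _
    have hh : (if (c.est t i).charge = true ∧ 0 < c.rawN t i Sp.mi then 1 else 0) = 0 := h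
    rw [show rawCount (c.inc t i) Sp.mi = c.rawN t i Sp.mi from rfl, hh]
    rfl
  | pr =>
    have h := htl.pabs t ht i
    rw [absN_pr] at h
    show (if (c.est t i).neg = true then 0 else rawCount (c.inc t i) Sp.pr) = _
    by_cases hn : (c.est t i).neg = true
    · rw [if_pos hn] at h ⊢
      exact h.symm
    · rw [if_neg hn]
      rfl

lemma Hv_ge_raw {Ts : ℕ} (htl : c.IsTail Ts) (t : ℕ) (ht : Ts ≤ t) (i : Fin n) (s : Sp) :
    c.rawN t i s ≤ c.Hv t i s := by
  rw [Hv_eq, c.inEff_eq_raw htl t ht i s]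
  omega

lemma Hv_ge_held (t : ℕ) (i : Fin n) (s : Sp) :
    ((c.est t i).hold s).toNat ≤ c.Hv t i s := by
  rw [Hv_eq]
  omega

lemma Em_pos_of_raw {Ts : ℕ} (htl : c.IsTail Ts) (t : ℕ) (ht : Ts ≤ t) (i : Fin n) (s : Sp)
    (hd : 0 < c.N.deg i) (h : 1 ≤ c.rawN t i s) : 1 ≤ c.Em t i s := by
  have := c.Hv_ge_raw htl t ht i s
  rw [Em]
  omega

lemma Em_pos_of_held (t : ℕ) (i : Fin n) (s : Sp) (ht : 1 ≤ t)
    (hd : 0 < c.N.deg i) (h : 1 ≤ c.heldN t i s) : 1 ≤ c.Em t i s := by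
  obtain ⟨u, rfl⟩ : ∃ u, t = u + 1 := ⟨t - 1, by omega⟩
  have h2 := c.Hv_ge_held (u + 1) i s
  rw [est_succ] at h2
  have : c.heldN (u+1) i s = ((c.st (u+1) i).hold s).toNat := rfl
  rw [Em]
  omega

lemma raw_from_buf (t : ℕ) (j : Fin n) (q : Fin (c.N.deg j)) (s : Sp)
    (h : 1 ≤ c.bufN t j q s) :
    1 ≤ c.rawN t (c.arcFlip ⟨j, q⟩).1 s := by
  set a := c.arcFlip ⟨j, q⟩ with ha
  have h1 : c.inc t a.1 a.2 = c.buf t (c.arcFlip ⟨a.1, a.2⟩).1 (c.arcFlip ⟨a.1, a.2⟩).2 :=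
    c.inc_eq_buf t a.1 a.2
  have h2 : (⟨a.1, a.2⟩ : Σ i : Fin n, Fin (c.N.deg i)) = a := rfl
  rw [h2, ha, c.arcFlip_invol ⟨j, q⟩] at h1
  have h3 : c.rawN t a.1 s = ∑ k, ((c.inc t a.1 k) s).toNat := rawCount_eq_sum _ s
  rw [h3]
  calc 1 ≤ ((c.inc t a.1 a.2) s).toNat := by rw [h1]; exact h
  _ ≤ ∑ k, ((c.inc t a.1 k) s).toNat :=
      Finset.single_le_sum (f := fun k => ((c.inc t a.1 k) s).toNat)
        (fun k _ => Nat.zero_le _) (Finset.mem_univ a.2)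

-- rotor value facts
lemma rot_val_succ (t : ℕ) (ht : 1 ≤ t) (i : Fin n) (s : Sp) (hd : 0 < c.N.deg i) :
    ((c.st (t + 1) i).rot s).val = (((c.st t i).rot s).val + c.Em t i s) % c.N.deg i := by
  obtain ⟨u, rfl⟩ : ∃ u, t = u + 1 := ⟨t - 1, by omega⟩
  rw [rot_succ, est_succ, rotAdd, dif_pos hd]

lemma rot_val_lt (t : ℕ) (ht : 1 ≤ t) (i : Fin n) (s : Sp) (hd : 0 < c.N.deg i) :
    ((c.st t i).rot s).val < c.N.deg i := by
  obtain ⟨u, rfl⟩ : ∃ u, t = u + 1 := ⟨t - 1, by omega⟩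
  rw [rot_succ, rotAdd, dif_pos hd]
  exact Nat.mod_lt _ hd

-- periodicity transfer
lemma st_per {T p : ℕ} (hper : c.IsPer T p) (t : ℕ) (ht : T ≤ t) (i : Fin n) :
    c.st (t + p) i = c.st t i := by
  show (c.R (t + p) i).1 = (c.R t i).1
  rw [hper.per t ht i]

lemma inc_per {T p : ℕ} (hper : c.IsPer T p) (t : ℕ) (ht : T ≤ t) (i : Fin n) :
    c.inc (t + p) i = c.inc t i := by
  funext k
  show (c.R (t + p) _).2.2 _ = (c.R t _).2.2 _
  rw [hper.per t ht _]

lemma rawN_per {T p : ℕ} (hper : c.IsPer T p) (t : ℕ) (ht : T ≤ t) (i : Fin n) (s : Sp) :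
    c.rawN (t + p) i s = c.rawN t i s := by
  rw [rawN, rawN, c.inc_per hper t ht i]

lemma Em_per {T p : ℕ} (hper : c.IsPer T p) (t : ℕ) (ht : T ≤ t) (i : Fin n) (s : Sp) :
    c.Em (t + p) i s = c.Em t i s := by
  rw [Em, Em, Hv, Hv, c.inc_per hper t ht i, est, est, c.st_per hper t ht i]

-- window sums
def Wsum (p : ℕ) (s : Sp) (a : ℕ) (j : Fin n) : ℕ := ∑ m ∈ Finset.range p, c.Em (a + m) j s

lemma Wsum_const {T p : ℕ} (hper : c.IsPer T p) (s : Sp) (j : Fin n) (a : ℕ) (ha : T ≤ a) :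
    c.Wsum p s a j = c.Wsum p s T j := by
  obtain ⟨m, rfl⟩ := Nat.exists_eq_add_of_le ha
  induction m with
  | zero => rfl
  | succ m ih =>
    have hstep : c.Wsum p s (T + m + 1) j = c.Wsum p s (T + m) j := by
      have h2 : c.Em (T + m + p) j s = c.Em (T + m) j s := c.Em_per hper (T + m) (by omega) j s
      have hL : ∑ m' ∈ Finset.range p, c.Em (T + m + 1 + m') j s
          = ∑ m' ∈ Finset.range p, c.Em (T + m + (m' + 1)) j s :=
        Finset.sum_congr rfl fun m' _ => by rw [show T + m + 1 + m' = T + m + (m' + 1) by omega]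
      have e1 : ∑ m' ∈ Finset.range (p + 1), c.Em (T + m + m') j s
          = (∑ m' ∈ Finset.range p, c.Em (T + m + m') j s) + c.Em (T + m + p) j s :=
        Finset.sum_range_succ _ p
      have e2 : ∑ m' ∈ Finset.range (p + 1), c.Em (T + m + m') j s
          = (∑ m' ∈ Finset.range p, c.Em (T + m + (m' + 1)) j s) + c.Em (T + m + 0) j s :=
        Finset.sum_range_succ' _ p
      show ∑ m' ∈ Finset.range p, c.Em (T + m + 1 + m') j s
          = ∑ m' ∈ Finset.range p, c.Em (T + m + m') j s
      rw [hL]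
      have e3 : T + m + 0 = T + m := rfl
      rw [e3] at e2
      omega
    rw [show T + (m + 1) = T + m + 1 from rfl, hstep]
    exact ih (by omega)

-- port coverage for an emitting node over one period window
lemma cover {T p : ℕ} (hper : c.IsPer T p) (s : Sp) (j : Fin n) (hd : 0 < c.N.deg j)
    (a : ℕ) (ha : T ≤ a) (haT : 1 ≤ a)
    (hW : 1 ≤ c.Wsum p s a j) (k : Fin (c.N.deg j)) :
    ∃ m, m < p ∧ c.bufN (a + m + 1) j k s = 1 := by
  have hcov := rotor_coverage (c.N.deg j) p hd
    (fun m => ((c.st (a + m) j).rot s).val) (fun m => c.Em (a + m) j s)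
    (fun m hm => by
      show ((c.st (a + (m + 1)) j).rot s).val
          = (((c.st (a + m) j).rot s).val + c.Em (a + m) j s) % c.N.deg j
      rw [show a + (m + 1) = a + m + 1 from rfl]
      exact c.rot_val_succ (a + m) (by omega) j s hd)
    (by
      show ((c.st (a + 0) j).rot s).val < c.N.deg j
      rw [show a + 0 = a from rfl]
      exact c.rot_val_lt a haT j s hd)
    (by
      show ((c.st (a + p) j).rot s).val = ((c.st (a + 0) j).rot s).val
      rw [show a + 0 = a from rfl, c.st_per hper a ha j])
    (by
      show 0 < ∑ u ∈ Finset.range p, c.Em (a + u) j s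
      have : (∑ u ∈ Finset.range p, c.Em (a + u) j s) = c.Wsum p s a j := rfl
      omega)
    k.val k.isLt
  obtain ⟨m, hm, m', hm', hmod⟩ := hcov
  refine ⟨m, hm, ?_⟩
  have hbuf : c.buf (a + m + 1) j k s =
      portUsed (c.N.deg j) ((c.est (a + m) j).rot s) (c.Em (a + m) j s) k := by
    rw [buf_succ]
  have hest : c.est (a + m) j = c.st (a + m) j := by
    obtain ⟨u, hu⟩ : ∃ u, a + m = u + 1 := ⟨a + m - 1, by omega⟩
    rw [hu]
    exact c.est_succ u j
  have hpu : portUsed (c.N.deg j) ((c.st (a + m) j).rot s) (c.Em (a + m) j s) k = true := by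
    rw [portUsed, decide_eq_true_eq]
    exact ⟨m', hm', hmod⟩
  rw [bufN, hbuf, hest, hpu]
  rfl

lemma flip_fst (j v : Fin n) (h : c.N.adj j v) :
    (c.arcFlip ⟨j, c.N.port j ⟨v, h⟩⟩).1 = v := by
  show ((c.N.port j).symm (c.N.port j ⟨v, h⟩)).1 = v
  rw [Equiv.symm_apply_apply]

/-- the visiting lemma: if the total count of species `s` is positive at the start of the
periodic regime, then every node receives a token of species `s` in every window. -/
lemma visiting {Ts T p : ℕ} (htl : c.IsTail Ts) (hper : c.IsPer T p) (hTT : Ts ≤ T)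
    (hd : ∀ i, 0 < c.N.deg i) (s : Sp) (hpos : 1 ≤ c.Tot T s) :
    ∀ v, ∀ a, T + 1 ≤ a → ∃ w, a ≤ w ∧ w < a + p ∧ 1 ≤ c.rawN w v s := by
  have hT1 : 1 ≤ T := le_trans htl.one_le hTT
  -- "good" nodes emit in every window
  set good : Fin n → Prop := fun j => 1 ≤ c.Wsum p s T j with hgood
  -- a node that receives (in the tail) is good
  have recv_good : ∀ v t, T ≤ t → 1 ≤ c.rawN t v s → good v := by
    intro v t ht hraw
    have hEm : 1 ≤ c.Em t v s := c.Em_pos_of_raw htl t (le_trans hTT ht) v s (hd v) hraw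
    obtain ⟨m, rfl⟩ := Nat.exists_eq_add_of_le ht
    -- reduce T + m into window via periodicity: use Wsum anchored at T + m
    have h1 : 1 ≤ c.Wsum p s (T + m) v := by
      calc 1 ≤ c.Em (T + m + 0) v s := by simpa using hEm
      _ ≤ c.Wsum p s (T + m) v :=
          Finset.single_le_sum (f := fun m' => c.Em (T + m + m') v s)
            (fun m' _ => Nat.zero_le _) (Finset.mem_range.mpr hper.ppos)
    rw [c.Wsum_const hper s v (T + m) (by omega)] at h1
    exact h1
  -- a good node makes each of its neighbors receive in each window, in particular good
  have good_step : ∀ j v, c.N.adj j v → good j →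
      ∀ a, T ≤ a → ∃ w, a + 1 ≤ w ∧ w < a + 1 + p ∧ 1 ≤ c.rawN w v s := by
    intro j v hadj hj a ha
    have hW : 1 ≤ c.Wsum p s a j := by
      rw [c.Wsum_const hper s j a ha]
      exact hj
    obtain ⟨m, hm, hbuf⟩ := c.cover hper s j (hd j) a ha (by omega) hW (c.N.port j ⟨v, hadj⟩)
    have hraw := c.raw_from_buf (a + m + 1) j (c.N.port j ⟨v, hadj⟩) s (by omega)
    rw [c.flip_fst j v hadj] at hraw
    exact ⟨a + m + 1, by omega, by omega, hraw⟩
  have good_adj : ∀ j v, c.N.adj j v → good j → good v := by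
    intro j v hadj hj
    obtain ⟨w, hw1, hw2, hraw⟩ := good_step j v hadj hj T le_rfl
    exact recv_good v w (by omega) hraw
  -- some node is good
  have hbase : ∃ i, good i := by
    by_contra hno
    push_neg at hno
    have : c.Tot T s = 0 := by
      rw [Tot]
      apply Finset.sum_eq_zero
      intro i _
      by_contra hne
      have hpos' : 1 ≤ c.heldN T i s + ∑ k, c.bufN T i k s := by omega
      rcases Nat.lt_or_ge 0 (c.heldN T i s) with hh | hh
      · have hEm : 1 ≤ c.Em T i s := c.Em_pos_of_held T i s hT1 (hd i) hh
        have : good i := by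
          show 1 ≤ c.Wsum p s T i
          calc 1 ≤ c.Em (T + 0) i s := by simpa using hEm
          _ ≤ c.Wsum p s T i := Finset.single_le_sum (f := fun m' => c.Em (T + m') i s)
              (fun m' _ => Nat.zero_le _) (Finset.mem_range.mpr hper.ppos)
        exact absurd this (by simpa using hno i)
      · have hbufpos : 1 ≤ ∑ k, c.bufN T i k s := by omega
        obtain ⟨q, -, hq⟩ := Finset.exists_lt_of_sum_lt (f := fun _ : Fin (c.N.deg i) => 0)
          (g := fun k => c.bufN T i k s) (by simp only [Finset.sum_const_zero]; exact hbufpos)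
        have hraw := c.raw_from_buf T i q s (by omega)
        have : good _ := recv_good _ T le_rfl hraw
        exact absurd this (by simpa using hno _)
    omega
  obtain ⟨i₀, hi₀⟩ := hbase
  -- all nodes are good, by connectivity
  have hall : ∀ v, good v := by
    intro v
    have hconn := c.N.connected i₀ v
    induction hconn with
    | refl => exact hi₀
    | tail hbc hadj ih => exact good_adj _ _ hadj ih
  -- conclusion
  intro v a ha
  obtain ⟨j, hj⟩ : ∃ j, c.N.adj v j := by
    have hpos' : 0 < Fintype.card {j // c.N.adj v j} := hd v
    obtain ⟨⟨j, hj⟩⟩ := Fintype.card_pos_iff.mp hpos'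
    exact ⟨j, hj⟩
  have hadj : c.N.adj j v := c.N.symm _ _ hj
  obtain ⟨w, hw1, hw2, hraw⟩ := good_step j v hadj (hall j) (a - 1) (by omega)
  exact ⟨w, by omega, by omega, hraw⟩

end Ctx
end Stmt17

namespace Stmt17

lemma drop_lemma (a : ℕ → ℕ) : ∀ T, 1 ≤ T → a T = 0 → 1 ≤ a 1 →
    ∃ τ, 1 ≤ τ ∧ τ < T ∧ 1 ≤ a τ ∧ a (τ + 1) = 0 := by
  intro T
  induction T with
  | zero => omega
  | succ T ih =>
    intro h1 h2 h3
    rcases Nat.lt_or_ge T 1 with hT | hT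
    · have : T = 0 := by omega
      subst this
      have h2' : a 1 = 0 := h2
      omega
    · rcases Nat.eq_zero_or_pos (a T) with h4 | h4
      · obtain ⟨τ, k1, k2, k3, k4⟩ := ih hT h4 h3
        exact ⟨τ, k1, by omega, k3, k4⟩
      · exact ⟨T, hT, by omega, h4, h2⟩

namespace Ctx

variable {K n : ℕ} (c : Ctx K n)

lemma est_eq (t : ℕ) (ht : 1 ≤ t) (i : Fin n) : c.est t i = c.st t i := by
  obtain ⟨u, rfl⟩ : ∃ u, t = u + 1 := ⟨t - 1, by omega⟩
  exact c.est_succ u i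

lemma neg_static {Ts : ℕ} (htl : c.IsTail Ts) (t : ℕ) (ht : Ts ≤ t) (i : Fin n) :
    (c.st t i).neg = (c.st Ts i).neg := by
  induction t, ht using Nat.le_induction with
  | base => rfl
  | succ t ht ih =>
    have h1 := c.neg_toNat_succ t i
    have h2 := htl.can t ht i
    rw [c.est_eq t (le_trans htl.one_le ht) i] at h1
    have h3 : ((c.st (t+1) i).neg).toNat = ((c.st t i).neg).toNat := by omega
    have h4 : (c.st (t+1) i).neg = (c.st t i).neg := by
      cases hx : (c.st (t+1) i).neg <;> cases hy : (c.st t i).neg <;>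
        rw [hx, hy] at h3 <;> simp_all
    rw [h4, ih]

lemma charge_static {Ts : ℕ} (htl : c.IsTail Ts) (t : ℕ) (ht : Ts ≤ t) (i : Fin n) :
    (c.st t i).charge = (c.st Ts i).charge := by
  induction t, ht using Nat.le_induction with
  | base => rfl
  | succ t ht ih =>
    have h1 := c.charge_toNat_succ t i
    have h2 := htl.chg t ht i
    rw [c.est_eq t (le_trans htl.one_le ht) i] at h1
    have h3 : ((c.st (t+1) i).charge).toNat = ((c.st t i).charge).toNat := by omega
    have h4 : (c.st (t+1) i).charge = (c.st t i).charge := by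
      cases hx : (c.st (t+1) i).charge <;> cases hy : (c.st t i).charge <;>
        rw [hx, hy] at h3 <;> simp_all
    rw [h4, ih]

lemma raw_zero_of_Tot (t : ℕ) (i : Fin n) (s : Sp)
    (h0 : c.Tot t s = 0) : c.rawN t i s = 0 := by
  have hbuf : ∀ j (q : Fin (c.N.deg j)), c.bufN t j q s = 0 := by
    intro j q
    rw [Tot] at h0
    have h1 : ∀ j ∈ Finset.univ, c.heldN t j s + ∑ k, c.bufN t j k s = 0 :=
      fun j _ => Finset.sum_eq_zero_iff.mp h0 j (Finset.mem_univ j)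
    have h2 := h1 j (Finset.mem_univ j)
    have h3 : ∑ k, c.bufN t j k s = 0 := by omega
    exact Finset.sum_eq_zero_iff.mp h3 q (Finset.mem_univ q)
  rw [rawN, rawCount_eq_sum]
  apply Finset.sum_eq_zero
  intro k _
  have := c.inc_eq_buf t i k
  have h4 := hbuf (c.arcFlip ⟨i, k⟩).1 (c.arcFlip ⟨i, k⟩).2
  rw [bufN] at h4
  rw [this]
  exact h4

lemma exists_neg_of_NegC (t : ℕ) (h : 1 ≤ c.NegC t) : ∃ i, (c.st t i).neg = true := by
  by_contra hno
  push_neg at hno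
  have : c.NegC t = 0 := by
    rw [NegC]
    apply Finset.sum_eq_zero
    intro i _
    have := hno i
    cases hx : (c.st t i).neg
    · rfl
    · exact absurd hx this
  omega

lemma exists_chg_of_ChgC (t : ℕ) (h : 1 ≤ c.ChgC t) : ∃ i, (c.st t i).charge = true := by
  by_contra hno
  push_neg at hno
  have : c.ChgC t = 0 := by
    rw [ChgC]
    apply Finset.sum_eq_zero
    intro i _
    have := hno i
    cases hx : (c.st t i).charge
    · rfl
    · exact absurd hx this
  omega

lemma NegC_mono (t u : ℕ) (ht : 1 ≤ t) (htu : t ≤ u) : c.NegC u ≤ c.NegC t :=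
  anti_of_succ_le c.NegC 1 (fun v hv => by have := c.NegC_succ v hv; omega) t u ht htu

/-- main setting: tail and periodic window -/
structure Setting (c : Ctx K n) (Ts T p : ℕ) : Prop where
  htl : c.IsTail Ts
  hper : c.IsPer T p
  hTT : Ts ≤ T
  hd : ∀ i, 0 < c.N.deg i
  totconst : ∀ t, Ts ≤ t → ∀ s, c.Tot t s = c.Tot Ts s

lemma Setting.T_one {Ts T p : ℕ} (S : c.Setting Ts T p) : 1 ≤ T := le_trans S.htl.one_le S.hTT

lemma Tot_eq_T {Ts T p : ℕ} (S : c.Setting Ts T p) (t : ℕ) (ht : T ≤ t) (s : Sp) :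
    c.Tot t s = c.Tot T s := by
  rw [S.totconst t (le_trans S.hTT ht) s, S.totconst T S.hTT s]

-- if plus tokens survive, no neg nodes survive
lemma no_neg_of_pl {Ts T p : ℕ} (S : c.Setting Ts T p) (hpl : 1 ≤ c.Tot T .pl) :
    c.NegC T = 0 := by
  have hTs1 := S.htl.one_le
  have hTsT := S.hTT
  by_contra hne
  have h1 : 1 ≤ c.NegC T := by omega
  obtain ⟨i, hi⟩ := c.exists_neg_of_NegC T h1
  obtain ⟨w, hw1, hw2, hraw⟩ := c.visiting S.htl S.hper S.hTT S.hd .pl hpl i (T + 1) le_rfl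
  have hneg : (c.st w i).neg = true := by
    rw [c.neg_static S.htl w (by omega), ← c.neg_static S.htl T S.hTT]
    exact hi
  have hcan := S.htl.can w (by omega) i
  rw [canI, c.est_eq w (by omega) i, if_pos ⟨hneg, hraw⟩] at hcan
  omega

lemma no_chg_of_mi {Ts T p : ℕ} (S : c.Setting Ts T p) (hmi : 1 ≤ c.Tot T .mi) :
    c.ChgC T = 0 := by
  have hTs1 := S.htl.one_le
  have hTsT := S.hTT
  by_contra hne
  have h1 : 1 ≤ c.ChgC T := by omega
  obtain ⟨i, hi⟩ := c.exists_chg_of_ChgC T h1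
  obtain ⟨w, hw1, hw2, hraw⟩ := c.visiting S.htl S.hper S.hTT S.hd .mi hmi i (T + 1) le_rfl
  have hchg : (c.st w i).charge = true := by
    rw [c.charge_static S.htl w (by omega), ← c.charge_static S.htl T S.hTT]
    exact hi
  have h2 := S.htl.chg w (by omega) i
  rw [chgI, c.est_eq w (by omega) i, if_pos ⟨hchg, hraw⟩] at h2
  omega

lemma no_pr_of_neg {Ts T p : ℕ} (S : c.Setting Ts T p) (hneg : 1 ≤ c.NegC T) :
    c.Tot T .pr = 0 := by
  have hTs1 := S.htl.one_le
  have hTsT := S.hTT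
  by_contra hne
  have hpr : 1 ≤ c.Tot T .pr := by omega
  obtain ⟨i, hi⟩ := c.exists_neg_of_NegC T hneg
  obtain ⟨w, hw1, hw2, hraw⟩ := c.visiting S.htl S.hper S.hTT S.hd .pr hpr i (T + 1) le_rfl
  have hnegw : (c.st w i).neg = true := by
    rw [c.neg_static S.htl w (by omega), ← c.neg_static S.htl T S.hTT]
    exact hi
  have h2 := S.htl.pabs w (by omega) i
  rw [absN_pr, c.est_eq w (by omega) i, if_pos hnegw] at h2
  omega

end Ctx
end Stmt17

namespace Stmt17
namespace Ctx

variable {K n : ℕ} (c : Ctx K n)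

lemma yv_succ' (t : ℕ) (i : Fin n) (hd : 0 < c.N.deg i) :
    c.yv (t + 1) i = if 0 < c.rawN t i .mi then 0
      else if 0 < c.rawN t i .pr then 1 else c.yv t i := by
  rw [yv_succ, if_neg (by omega)]

lemma Tot_pr_const_noneg (t : ℕ) (ht : 1 ≤ t) (hd : ∀ i, 0 < c.N.deg i)
    (hneg : ∀ i, (c.st t i).neg = false) : c.Tot (t + 1) .pr = c.Tot t .pr := by
  have hcan : ∀ i, c.canI t i = 0 := by
    intro i
    rw [canI, c.est_eq t ht i, if_neg]
    rintro ⟨h1, -⟩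
    rw [hneg i] at h1
    exact Bool.noConfusion h1
  have habs : ∀ i, c.absN t i .pr = 0 := by
    intro i
    rw [absN_pr, c.est_eq t ht i, if_neg]
    intro h1
    rw [hneg i] at h1
    exact Bool.noConfusion h1
  have hcre : ∀ i, c.creN t i .pr = 0 := by
    intro i
    rw [creN_pr]
    exact hcan i
  have h1 := c.Tot_succ t .pr hd ht
  have h2 : ∑ i, c.absN t i .pr = 0 := Finset.sum_eq_zero fun i _ => habs i
  have h3 : ∑ i, c.creN t i .pr = 0 := Finset.sum_eq_zero fun i _ => hcre i
  omega

lemma neg_all_false (t : ℕ) (h : c.NegC t = 0) (i : Fin n) : (c.st t i).neg = false := by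
  rw [NegC] at h
  have := Finset.sum_eq_zero_iff.mp h i (Finset.mem_univ i)
  cases hx : (c.st t i).neg
  · rfl
  · rw [hx] at this; exact absurd this (by simp)

/-- case `cB ≤ cA`: probes survive  -/
lemma pr_survive {Ts T p : ℕ} (S : c.Setting Ts T p) (hn2 : 2 ≤ n)
    (hnegT : c.NegC T = 0) : 1 ≤ c.Tot T .pr := by
  have hT1 := S.T_one
  rcases Nat.eq_zero_or_pos c.cBv with hB | hB
  · -- no neg nodes ever
    have hneg : ∀ u, 1 ≤ u → c.NegC u = 0 := by
      intro u hu
      have h1 : c.NegC u ≤ c.NegC 1 := c.NegC_mono 1 u le_rfl hu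
      rw [NegC_one, hB] at h1
      omega
    have hconst : ∀ u, 1 ≤ u → c.Tot u .pr = n := by
      intro u hu
      induction u with
      | zero => omega
      | succ v ih =>
        rcases Nat.lt_or_ge v 1 with hv | hv
        · have : v = 0 := by omega
          subst this
          exact c.Tot_one_pr S.hd
        · rw [c.Tot_pr_const_noneg v hv S.hd (fun i => c.neg_all_false v (hneg v hv) i)]
          exact ih hv
    rw [hconst T hT1]
    omega
  · -- negs existed and disappeared: last cancellation creates a probe
    have hN1 : 1 ≤ c.NegC 1 := by rw [NegC_one]; omega
    obtain ⟨τ, hτ1, hτT, hτpos, hτ0⟩ := drop_lemma c.NegC T hT1 hnegT hN1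
    -- some node cancels at round τ+1
    have hsum : 1 ≤ ∑ i, c.canI τ i := by
      have := c.NegC_succ τ hτ1
      omega
    obtain ⟨i, hi⟩ : ∃ i, 1 ≤ c.canI τ i := by
      by_contra hno
      push_neg at hno
      have : ∑ i, c.canI τ i = 0 := Finset.sum_eq_zero fun i _ => by have := hno i; omega
      omega
    -- the new probe makes the total positive
    have hpos : 1 ≤ c.Tot (τ + 1) .pr := by
      have h1 : c.Tot (τ + 1) .pr = ∑ j, c.Hv τ j .pr := by
        rw [Tot]
        exact Finset.sum_congr rfl fun j _ => c.local_conserve τ j .pr (S.hd j)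
      have h2 : c.creN τ i .pr ≤ c.Hv τ i .pr := by
        rw [Hv_eq]; omega
      have h3 : c.creN τ i .pr = c.canI τ i := c.creN_pr τ i
      have h4 : c.Hv τ i .pr ≤ ∑ j, c.Hv τ j .pr :=
        Finset.single_le_sum (f := fun j => c.Hv τ j .pr) (fun j _ => Nat.zero_le _)
          (Finset.mem_univ i)
      omega
    -- totals constant afterwards (no neg nodes from τ+1 on)
    have hneg : ∀ u, τ + 1 ≤ u → c.NegC u = 0 := by
      intro u hu
      have h1 : c.NegC u ≤ c.NegC (τ + 1) := c.NegC_mono (τ + 1) u (by omega) hu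
      omega
    have hconst : ∀ u, τ + 1 ≤ u → 1 ≤ c.Tot u .pr := by
      intro u hu
      induction u, hu using Nat.le_induction with
      | base => exact hpos
      | succ u hu ih =>
        rw [c.Tot_pr_const_noneg u (by omega) S.hd
          (fun j => c.neg_all_false u (hneg u hu) j)]
        exact ih
    exact hconst T (by omega)

/-- output stabilization to 1 -/
lemma y_stab_one {T' p : ℕ} (hp : 0 < p) (i : Fin n) (hd : 0 < c.N.deg i)
    (hmi : ∀ w, T' ≤ w → c.rawN w i .mi = 0)
    (hpr : ∀ a, T' + 1 ≤ a → ∃ w, a ≤ w ∧ w < a + p ∧ 1 ≤ c.rawN w i .pr) :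
    ∀ t, T' + p + 1 ≤ t → c.yv t i = 1 := by
  intro t ht
  obtain ⟨w, hw1, hw2, hraw⟩ := hpr (t - p) (by omega)
  have hbase : c.yv (w + 1) i = 1 := by
    rw [c.yv_succ' w i hd, hmi w (by omega), if_neg (by omega), if_pos (by omega)]
  have hkeep : ∀ v, w + 1 ≤ v → c.yv v i = 1 := by
    intro v hv
    induction v, hv using Nat.le_induction with
    | base => exact hbase
    | succ v hv ih =>
      rw [c.yv_succ' v i hd, hmi v (by omega), if_neg (by omega)]
      split
      · rfl
      · exact ih
  exact hkeep t (by omega)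

lemma y_stab_zero {T' p : ℕ} (hp : 0 < p) (i : Fin n) (hd : 0 < c.N.deg i)
    (hpr : ∀ w, T' ≤ w → c.rawN w i .pr = 0)
    (hmi : ∀ a, T' + 1 ≤ a → ∃ w, a ≤ w ∧ w < a + p ∧ 1 ≤ c.rawN w i .mi) :
    ∀ t, T' + p + 1 ≤ t → c.yv t i = 0 := by
  intro t ht
  obtain ⟨w, hw1, hw2, hraw⟩ := hmi (t - p) (by omega)
  have hbase : c.yv (w + 1) i = 0 := by
    rw [c.yv_succ' w i hd, if_pos (by omega)]
  have hkeep : ∀ v, w + 1 ≤ v → c.yv v i = 0 := by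
    intro v hv
    induction v, hv using Nat.le_induction with
    | base => exact hbase
    | succ v hv ih =>
      rw [c.yv_succ' v i hd, hpr v (by omega)]
      split
      · rfl
      · rw [if_neg (by omega)]
        exact ih
  exact hkeep t (by omega)

/-- main lemma for `n ≥ 2` -/
lemma main2 (hn2 : 2 ≤ n) :
    ∃ t', ∀ t, t' ≤ t → ∀ i, c.yv t i = (if c.cBv ≤ c.cAv then 1 else 0) := by
  have hd : ∀ i, 0 < c.N.deg i := c.deg_pos hn2
  obtain ⟨Ts, hTs1, hcan, hchg, hpabs, htot, hnegc, hchgc⟩ := c.exists_tail hd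
  have htl : c.IsTail Ts := ⟨hTs1, hcan, hchg, hpabs⟩
  obtain ⟨T, hTT, p, hp, hper'⟩ := c.exists_periodic Ts
  have hper : c.IsPer T p := ⟨hp, hper'⟩
  have S : c.Setting Ts T p := ⟨htl, hper, hTT, hd, htot⟩
  have hT1 := S.T_one
  have hinvPl := c.invPl hd T hT1
  have hinvMi := c.invMi hd T hT1
  rcases le_or_gt c.cBv c.cAv with hAB | hAB
  · -- answer 1
    rw [if_pos hAB]
    have hnegT : c.NegC T = 0 := by
      by_contra hne
      have h1 : 1 ≤ c.Tot T .pl := by omega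
      have := c.no_neg_of_pl S h1
      omega
    have hmi0 : c.Tot T .mi = 0 := by
      by_contra hne
      have h1 : 1 ≤ c.Tot T .mi := by omega
      have := c.no_chg_of_mi S h1
      omega
    have hpr := c.pr_survive S hn2 hnegT
    refine ⟨T + p + 1, fun t ht i => ?_⟩
    apply c.y_stab_one (T' := T) hp i (hd i) ?_ ?_ t ht
    · intro w hw
      have h1 : c.Tot w .mi = 0 := by rw [c.Tot_eq_T S w hw .mi]; exact hmi0
      exact c.raw_zero_of_Tot w i .mi h1
    · intro a ha
      exact c.visiting htl hper hTT hd .pr hpr i a ha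
  · -- answer 0
    rw [if_neg (by omega)]
    have hpl0 : c.Tot T .pl = 0 := by
      by_contra hne
      have h1 : 1 ≤ c.Tot T .pl := by omega
      have h2 := c.no_neg_of_pl S h1
      omega
    have hnegT : 1 ≤ c.NegC T := by omega
    have hpr0 : c.Tot T .pr = 0 := c.no_pr_of_neg S hnegT
    have hmi : 1 ≤ c.Tot T .mi := by
      by_contra hne
      have h1 : c.Tot T .mi = 0 := by omega
      omega
    refine ⟨T + p + 1, fun t ht i => ?_⟩
    apply c.y_stab_zero (T' := T) hp i (hd i) ?_ ?_ t ht
    · intro w hw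
      have h1 : c.Tot w .pr = 0 := by rw [c.Tot_eq_T S w hw .pr]; exact hpr0
      exact c.raw_zero_of_Tot w i .pr h1
    · intro a ha
      exact c.visiting htl hper hTT hd .mi hmi i a ha

end Ctx
end Stmt17

namespace Stmt17
namespace Ctx

variable {K : ℕ}

lemma main1 (c : Ctx K 1) :
    ∃ t', ∀ t, t' ≤ t → ∀ i, c.yv t i = (if c.cBv ≤ c.cAv then 1 else 0) := by
  have hdeg : ∀ i : Fin 1, c.N.deg i = 0 := by
    intro i
    rw [PortNetwork.deg]
    rw [Fintype.card_eq_zero_iff]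
    constructor
    intro ⟨j, hj⟩
    have : j = i := Subsingleton.elim j i
    rw [this] at hj
    exact c.N.loopless i hj
  have hraw : ∀ t i s, c.rawN t i s = 0 := by
    intro t i s
    rw [rawN, rawCount]
    have : (Finset.univ : Finset (Fin (c.N.deg i))).card = 0 := by
      simp [hdeg i]
    have h2 := Finset.card_filter_le (Finset.univ : Finset (Fin (c.N.deg i)))
      (fun k => c.inc t i k s = true)
    omega
  have hneg : ∀ t, 1 ≤ t → ∀ i, (c.st t i).neg = c.xb i := by
    intro t ht i
    induction t with
    | zero => omega
    | succ u ih =>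
      rcases Nat.lt_or_ge u 1 with hu | hu
      · have : u = 0 := by omega
        subst this
        exact c.neg_one i
      · rw [neg_succ, c.est_eq u hu i, ih hu]
        have h1 := hraw u i .pl
        simp [h1]
  have hy : ∀ t, 2 ≤ t → ∀ i, c.yv t i = (if c.xb i then 0 else 1) := by
    intro t ht i
    obtain ⟨u, rfl⟩ : ∃ u, t = u + 1 := ⟨t - 1, by omega⟩
    rw [yv_succ, if_pos (hdeg i), c.est_eq u (by omega) i, hneg u (by omega) i]
  refine ⟨2, fun t ht i => ?_⟩
  rw [hy t ht i]
  have hxai : c.cAv = (c.xa i).toNat := by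
    rw [cAv]
    rw [show (Finset.univ : Finset (Fin 1)) = {i} from by
      ext j
      simp only [Finset.mem_univ, Finset.mem_singleton, true_iff]
      exact Subsingleton.elim j i]
    simp
  have hxbi : c.cBv = (c.xb i).toNat := by
    rw [cBv]
    rw [show (Finset.univ : Finset (Fin 1)) = {i} from by
      ext j
      simp only [Finset.mem_univ, Finset.mem_singleton, true_iff]
      exact Subsingleton.elim j i]
    simp
  have hdisj : ¬(c.xa i = true ∧ c.xb i = true) := by
    rintro ⟨ha, hb⟩
    rw [xa, decide_eq_true_eq, Finset.mem_sdiff] at ha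
    rw [xb, decide_eq_true_eq, Finset.mem_sdiff] at hb
    exact ha.2 hb.1
  cases hxb : c.xb i
  · rw [if_neg (by simp)]
    rw [if_pos]
    rw [hxbi, hxb]
    simp
  · rw [if_pos rfl, if_neg]
    rw [hxai, hxbi, hxb]
    have hxa : c.xa i = false := by
      cases hxa : c.xa i
      · rfl
      · exact absurd ⟨hxa, hxb⟩ hdisj
    rw [hxa]
    simp

end Ctx

lemma toNat_sum_eq_card {n K : ℕ} (x : Fin n → Fin K) (J : Finset (Fin K)) :
    ∑ i, (decide (x i ∈ J)).toNat = (Finset.univ.filter fun i => x i ∈ J).card := by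
  rw [Finset.card_filter]
  apply Finset.sum_congr rfl
  intro i _
  by_cases h : x i ∈ J <;> simp [h]

lemma card_compare {n K : ℕ} (x : Fin n → Fin K) (I I' : Finset (Fin K)) :
    ((Finset.univ.filter fun i => x i ∈ I').card ≤ (Finset.univ.filter fun i => x i ∈ I).card
      ↔ (Finset.univ.filter fun i => x i ∈ I' \ I).card
        ≤ (Finset.univ.filter fun i => x i ∈ I \ I').card) := by
  classical
  have hsplit : ∀ (J J' : Finset (Fin K)),
      (Finset.univ.filter fun i => x i ∈ J).card
        = (Finset.univ.filter fun i => x i ∈ J \ J').card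
          + (Finset.univ.filter fun i => x i ∈ J ∩ J').card := by
    intro J J'
    rw [← Finset.card_union_of_disjoint]
    · congr 1
      ext i
      simp only [Finset.mem_filter, Finset.mem_univ, true_and, Finset.mem_union,
        Finset.mem_sdiff, Finset.mem_inter]
      tauto
    · rw [Finset.disjoint_left]
      intro a ha hb
      simp only [Finset.mem_filter, Finset.mem_univ, true_and, Finset.mem_sdiff,
        Finset.mem_inter] at ha hb
      tauto
  have h1 := hsplit I I'
  have h2 := hsplit I' I
  have h3 : (Finset.univ.filter fun i => x i ∈ I ∩ I').card
      = (Finset.univ.filter fun i => x i ∈ I' ∩ I).card := by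
    congr 1
    ext i
    simp only [Finset.mem_filter, Finset.mem_inter]
    tauto
  omega

theorem main_theorem (K : ℕ) (I I' : Finset (Fin K)) :
    ComputableFamily
      (fun n (x : Fin n → Fin K) =>
        if (Finset.univ.filter fun i => x i ∈ I').card ≤
            (Finset.univ.filter fun i => x i ∈ I).card
        then (1 : Fin 2) else 0) := by
  refine ⟨Msg, fun d => NS d, algo K I I', inferInstance, inferInstance,
    fun d => inferInstance, ?_⟩
  intro n hn N x
  set c : Ctx K n := ⟨I, I', N, x⟩ with hc
  have hgoal : ∀ t i, ((algo K I I').run N x t i).2.1 = c.yv t i := fun t i => rfl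
  have hval : (if (Finset.univ.filter fun i => x i ∈ I').card ≤
      (Finset.univ.filter fun i => x i ∈ I).card then (1 : Fin 2) else 0)
      = (if c.cBv ≤ c.cAv then 1 else 0) := by
    have hA : c.cAv = (Finset.univ.filter fun i => x i ∈ I \ I').card :=
      toNat_sum_eq_card x (I \ I')
    have hB : c.cBv = (Finset.univ.filter fun i => x i ∈ I' \ I).card :=
      toNat_sum_eq_card x (I' \ I)
    by_cases h : (Finset.univ.filter fun i => x i ∈ I').card ≤
        (Finset.univ.filter fun i => x i ∈ I).card
    · rw [if_pos h, if_pos]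
      rw [hA, hB]
      exact (card_compare x I I').mp h
    · rw [if_neg h, if_neg]
      rw [hA, hB]
      intro hcon
      exact h ((card_compare x I I').mpr hcon)
  rw [Algorithm.FinalOutput]
  rcases Nat.lt_or_ge n 2 with hn2 | hn2
  · have hn1 : n = 1 := by omega
    subst hn1
    obtain ⟨t', ht'⟩ := c.main1
    exact ⟨t', fun t ht i => by rw [hgoal t i, ht' t ht i]; exact hval.symm⟩
  · obtain ⟨t', ht'⟩ := c.main2 hn2
    exact ⟨t', fun t ht i => by rw [hgoal t i, ht' t ht i]; exact hval.symm⟩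

end Stmt17


/-- for arbitrary subsets `I, I'` of the alphabet, deciding
whether at least as many nodes have a value in `I` as have a value in `I'` is
computable. -/
theorem subset_count_comparison_computable (K : ℕ) (I I' : Finset (Fin K)) :
    ComputableFamily
      (fun n (x : Fin n → Fin K) =>
        if (Finset.univ.filter fun i => x i ∈ I').card ≤
            (Finset.univ.filter fun i => x i ∈ I).card
        then (1 : Fin 2) else 0) := Stmt17.main_theorem K I I'
end
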